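/- arXiv:1604.00858 — 6 statements merged into one kernel-verified Lean document; each statement's English description precedes it below -/
import Mathlib

section
/- For every integer n ≥ 2: if n is even then #{1 ≤ i ≤ 2^n : λ_i = 0} = 2·#{1 ≤ i ≤ 2^{n−1} : λ_i = 0} − 1, and if n is odd then #{1 ≤ i ≤ 2^n : λ_i = 0} = 2·#{1 ≤ i ≤ 2^{n−1} : λ_i = 0} + 1. -/
theorem stmt9 (τ : ℕ → ℤ) (hτ0 : τ 0 = 0) (hτe : ∀ i, τ (2 * i) = τ i)
    (hτo : ∀ i, τ (2 * i + 1) = 1 - τ i)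
    (lam : ℕ → ℤ) (hlam : ∀ i, 1 ≤ i → lam i = τ i - τ (i - 1)) :
    ∀ n : ℕ, 2 ≤ n →
      (Even n →
        ((((Finset.Icc 1 (2 ^ n)).filter (fun i => lam i = 0)).card : ℤ) =
          2 * (((Finset.Icc 1 (2 ^ (n - 1))).filter (fun i => lam i = 0)).card : ℤ) - 1)) ∧
      (Odd n →
        ((((Finset.Icc 1 (2 ^ n)).filter (fun i => lam i = 0)).card : ℤ) =
          2 * (((Finset.Icc 1 (2 ^ (n - 1))).filter (fun i => lam i = 0)).card : ℤ) + 1)) := by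
  have tau01 : ∀ i, τ i = 0 ∨ τ i = 1 := by
    intro i
    induction i using Nat.strong_induction_on with
    | _ i ih =>
      match i, ih with
      | 0, _ => exact Or.inl hτ0
      | Nat.succ i, ih =>
        show τ (i + 1) = 0 ∨ τ (i + 1) = 1
        rcases Nat.even_or_odd (i + 1) with ⟨j, hj⟩ | ⟨j, hj⟩
        · have h := ih j (by omega)
          rw [hj, show j + j = 2 * j by ring, hτe]
          exact h
        · have h := ih j (by omega)
          rw [hj, hτo]
          omega
  have hlamodd : ∀ j, lam (2 * j + 1) ≠ 0 := by
    intro j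
    rw [hlam (2 * j + 1) (by omega), show 2 * j + 1 - 1 = 2 * j by omega, hτo, hτe]
    omega
  have hlameven : ∀ j, 1 ≤ j → (lam (2 * j) = 0 ↔ lam j ≠ 0) := by
    intro j hj
    rw [hlam (2 * j) (by omega), hlam j hj,
      show 2 * j - 1 = 2 * (j - 1) + 1 by omega, hτo, hτe]
    rcases tau01 j with h1 | h1 <;> rcases tau01 (j - 1) with h2 | h2 <;> omega
  have hset : ∀ n : ℕ, (Finset.Icc 1 (2 ^ (n + 1))).filter (fun i => lam i = 0)
      = ((Finset.Icc 1 (2 ^ n)).filter (fun j => ¬ lam j = 0)).image (fun j => 2 * j) := by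
    intro n
    have hp : (2 : ℕ) ^ (n + 1) = 2 * 2 ^ n := by ring
    ext i
    simp only [Finset.mem_filter, Finset.mem_image, Finset.mem_Icc]
    constructor
    · rintro ⟨⟨h1, h2⟩, h3⟩
      rcases Nat.even_or_odd i with ⟨j, hj⟩ | ⟨j, hj⟩
      · have hj1 : 1 ≤ j := by omega
        refine ⟨j, ⟨⟨hj1, by omega⟩, ?_⟩, by omega⟩
        exact (hlameven j hj1).mp (by rw [show 2 * j = i by omega]; exact h3)
      · exact absurd h3 (by rw [hj]; exact hlamodd j)
    · rintro ⟨j, ⟨⟨hj1, hj2⟩, hj3⟩, rfl⟩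
      exact ⟨⟨by omega, by omega⟩, (hlameven j hj1).mpr hj3⟩
  have hrec : ∀ n : ℕ,
      ((((Finset.Icc 1 (2 ^ (n + 1))).filter (fun i => lam i = 0)).card : ℤ)
        = 2 ^ n - (((Finset.Icc 1 (2 ^ n)).filter (fun i => lam i = 0)).card : ℤ)) := by
    intro n
    rw [hset n, Finset.card_image_of_injective _ (fun a b h => by omega)]
    have h1 := Finset.card_filter_add_card_filter_not
      (s := Finset.Icc 1 (2 ^ n)) (p := fun i => lam i = 0)
    have h2 : (Finset.Icc 1 (2 ^ n)).card = 2 ^ n := by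
      simp [Nat.card_Icc]
    have h4 : ((Finset.Icc 1 (2 ^ n)).filter (fun j => ¬ lam j = 0)).card
        + ((Finset.Icc 1 (2 ^ n)).filter (fun i => lam i = 0)).card = 2 ^ n := by omega
    have h5 := congrArg (Nat.cast : ℕ → ℤ) h4
    push_cast at h5
    linarith
  have key : ∀ n : ℕ,
      3 * (((Finset.Icc 1 (2 ^ n)).filter (fun i => lam i = 0)).card : ℤ)
        = 2 ^ n - (-1) ^ n := by
    intro n
    induction n with
    | zero =>
      have h0 : (Finset.Icc 1 (2 ^ 0)).filter (fun i => lam i = 0) = ∅ := by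
        ext i
        simp only [Finset.mem_filter, Finset.mem_Icc, Finset.notMem_empty, iff_false, not_and,
          pow_zero]
        rintro ⟨h1, h2⟩
        have : i = 2 * 0 + 1 := by omega
        rw [this]
        exact hlamodd 0
      rw [h0]
      simp
    | succ n ih =>
      have h1 := hrec n
      have h2 : ((-1 : ℤ)) ^ (n + 1) = -(-1) ^ n := by ring
      have h3 : ((2 : ℤ)) ^ (n + 1) = 2 * 2 ^ n := by ring
      rw [h2, h3]
      linarith
  intro n hn
  obtain ⟨m, rfl⟩ : ∃ m, n = m + 1 := ⟨n - 1, by omega⟩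
  have h1 := key (m + 1)
  have h2 := key m
  have hm : m + 1 - 1 = m := by omega
  rw [hm]
  have h3 : ((2 : ℤ)) ^ (m + 1) = 2 * 2 ^ m := by ring
  constructor
  · intro he
    have ho : Odd m := by
      rcases Nat.even_or_odd m with h | h
      · exact absurd he (by simp [Nat.even_add_one, h]);
      · exact h
    rw [he.neg_one_pow] at h1
    rw [ho.neg_one_pow] at h2
    linarith
  · intro ho
    have he : Even m := by
      rcases Nat.even_or_odd m with h | h
      · exact h
      · exact absurd ho (by simp [Nat.odd_add_one, h])
    rw [ho.neg_one_pow] at h1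
    rw [he.neg_one_pow] at h2
    linarith
end

section
/- For every integer n ≥ 1, (#{1 ≤ i ≤ 2^n : λ_i = 0})/2^n = −∑_{i=1}^{n} (−1/2)^i (equivalently, #{1 ≤ i ≤ 2^n : λ_i = 0} = (2^n − (−1)^n)/3). -/
open Finset

private lemma tau01 (τ : ℕ → ℤ) (hτ0 : τ 0 = 0) (hτe : ∀ i, τ (2 * i) = τ i)
    (hτo : ∀ i, τ (2 * i + 1) = 1 - τ i) : ∀ i, τ i = 0 ∨ τ i = 1 := by
  intro i
  induction i using Nat.strong_induction_on with
  | _ i ih =>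
    match i with
    | 0 => exact Or.inl hτ0
    | (n+1) =>
      rcases Nat.even_or_odd (n+1) with ⟨k, hk⟩ | ⟨k, hk⟩
      · have hk2 : n + 1 = 2 * k := by omega
        have hklt : k < n + 1 := by omega
        rw [hk2, hτe]
        exact ih k hklt
      · have hklt : k < n + 1 := by omega
        rw [hk, hτo]
        rcases ih k hklt with h | h <;> simp [h]

private lemma lam_odd (τ : ℕ → ℤ) (hτ0 : τ 0 = 0) (hτe : ∀ i, τ (2 * i) = τ i)
    (hτo : ∀ i, τ (2 * i + 1) = 1 - τ i)
    (lam : ℕ → ℤ) (hlam : ∀ i, 1 ≤ i → lam i = τ i - τ (i - 1)) (k : ℕ) :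
    lam (2 * k + 1) ≠ 0 := by
  have h := hlam (2 * k + 1) (by omega)
  have h2 : 2 * k + 1 - 1 = 2 * k := by omega
  rw [h2, hτo, hτe] at h
  rcases tau01 τ hτ0 hτe hτo k with hk | hk <;> rw [h, hk] <;> norm_num

private lemma lam_even (τ : ℕ → ℤ) (hτ0 : τ 0 = 0) (hτe : ∀ i, τ (2 * i) = τ i)
    (hτo : ∀ i, τ (2 * i + 1) = 1 - τ i)
    (lam : ℕ → ℤ) (hlam : ∀ i, 1 ≤ i → lam i = τ i - τ (i - 1)) (k : ℕ) (hk : 1 ≤ k) :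
    lam (2 * k) = 0 ↔ lam k ≠ 0 := by
  have h := hlam (2 * k) (by omega)
  have h' := hlam k hk
  have h2 : 2 * k - 1 = 2 * (k - 1) + 1 := by omega
  have h3 : 2 * (k - 1) + 1 + 1 = 2 * k := by omega
  rw [h2, hτo] at h
  rw [hτe] at h
  rcases tau01 τ hτ0 hτe hτo k with hk1 | hk1 <;>
    rcases tau01 τ hτ0 hτe hτo (k - 1) with hk2 | hk2 <;>
      rw [h, h', hk1, hk2] <;> norm_num

private lemma card_step (τ : ℕ → ℤ) (hτ0 : τ 0 = 0) (hτe : ∀ i, τ (2 * i) = τ i)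
    (hτo : ∀ i, τ (2 * i + 1) = 1 - τ i)
    (lam : ℕ → ℤ) (hlam : ∀ i, 1 ≤ i → lam i = τ i - τ (i - 1)) (n : ℕ) :
    (((Icc 1 (2 ^ (n+1))).filter (fun i => lam i = 0)).card : ℤ)
      = 2 ^ n - (((Icc 1 (2 ^ n)).filter (fun i => lam i = 0)).card : ℤ) := by
  have hbij : ((Icc 1 (2 ^ (n+1))).filter (fun i => lam i = 0)).card
      = ((Icc 1 (2 ^ n)).filter (fun i => lam i ≠ 0)).card := by
    refine Finset.card_bij' (fun i _ => i / 2) (fun k _ => 2 * k) ?_ ?_ ?_ ?_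
    · intro i hi
      simp only [mem_filter, mem_Icc] at hi ⊢
      obtain ⟨⟨h1, h2⟩, h0⟩ := hi
      have hev : ∃ k, i = 2 * k := by
        rcases Nat.even_or_odd i with ⟨k, hk⟩ | ⟨k, hk⟩
        · exact ⟨k, by omega⟩
        · exact absurd (hk ▸ h0) (lam_odd τ hτ0 hτe hτo lam hlam k)
      obtain ⟨k, rfl⟩ := hev
      have hk1 : 1 ≤ k := by omega
      have := (lam_even τ hτ0 hτe hτo lam hlam k hk1).mp h0
      refine ⟨⟨by omega, ?_⟩, ?_⟩
      · have hp : (2:ℕ) ^ (n+1) = 2 * 2 ^ n := by ring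
        omega
      · have h5 : 2 * k / 2 = k := by omega
        rw [h5]; exact this
    · intro k hk
      simp only [mem_filter, mem_Icc] at hk ⊢
      obtain ⟨⟨h1, h2⟩, h0⟩ := hk
      have hp : (2:ℕ) ^ (n+1) = 2 * 2 ^ n := by ring
      exact ⟨⟨by omega, by omega⟩, (lam_even τ hτ0 hτe hτo lam hlam k h1).mpr h0⟩
    · intro i hi
      simp only [mem_filter, mem_Icc] at hi
      obtain ⟨⟨h1, h2⟩, h0⟩ := hi
      rcases Nat.even_or_odd i with ⟨k, hk⟩ | ⟨k, hk⟩
      · omega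
      · exact absurd (hk ▸ h0) (lam_odd τ hτ0 hτe hτo lam hlam k)
    · intro k _; omega
  rw [hbij]
  have h := Finset.card_filter_add_card_filter_not (s := Icc 1 (2 ^ n))
    (p := fun i => lam i = 0)
  have hcard : (Icc 1 (2 ^ n)).card = 2 ^ n := by
    rw [Nat.card_Icc]
    exact Nat.succ_sub_one _
  rw [hcard] at h
  have he : (Icc 1 (2 ^ n)).filter (fun a => ¬ (fun i => lam i = 0) a)
      = (Icc 1 (2 ^ n)).filter (fun i => lam i ≠ 0) := by
    apply Finset.filter_congr
    intro x _
    simp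
  rw [he] at h
  have hT : ((Icc 1 (2 ^ n)).filter (fun i => lam i ≠ 0)).card
      = 2 ^ n - ((Icc 1 (2 ^ n)).filter (fun i => lam i = 0)).card := by omega
  have hle : ((Icc 1 (2 ^ n)).filter (fun i => lam i = 0)).card ≤ 2 ^ n := by omega
  rw [hT, Nat.cast_sub hle]
  push_cast
  ring

private lemma card_formula (τ : ℕ → ℤ) (hτ0 : τ 0 = 0) (hτe : ∀ i, τ (2 * i) = τ i)
    (hτo : ∀ i, τ (2 * i + 1) = 1 - τ i)
    (lam : ℕ → ℤ) (hlam : ∀ i, 1 ≤ i → lam i = τ i - τ (i - 1)) :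
    ∀ n : ℕ, 1 ≤ n →
      3 * (((Icc 1 (2 ^ n)).filter (fun i => lam i = 0)).card : ℤ)
        = 2 ^ n - (-1) ^ n := by
  intro n hn
  induction n with
  | zero => omega
  | succ m ih =>
    rcases Nat.eq_or_lt_of_le hn with h1 | h1
    · -- m = 0, n = 1
      have hm : m = 0 := by omega
      subst hm
      have hτ1 : τ 1 = 1 := by have := hτo 0; norm_num at this; rw [this, hτ0]; ring
      have hτ2 : τ 2 = 1 := by have := hτe 1; norm_num at this; rw [this, hτ1]
      have hl1 : lam 1 ≠ 0 := by rw [hlam 1 le_rfl]; norm_num [hτ1, hτ0]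
      have hl2 : lam 2 = 0 := by rw [hlam 2 (by norm_num)]; norm_num [hτ1, hτ2]
      have hIcc : Icc 1 (2 ^ 1) = {1, 2} := by decide
      rw [hIcc]
      rw [Finset.filter_insert, if_neg hl1, Finset.filter_singleton, if_pos hl2]
      norm_num
    · have hm : 1 ≤ m := by omega
      have ihm := ih hm
      have hstep := card_step τ hτ0 hτe hτo lam hlam m
      rw [hstep]
      have : ((-1 : ℤ)) ^ (m + 1) = -(-1 : ℤ) ^ m := by ring
      rw [this]
      have h2 : (2 : ℤ) ^ (m + 1) = 2 * 2 ^ m := by ring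
      rw [h2]
      linarith

private lemma sum_formula : ∀ n : ℕ,
    ∑ i ∈ Finset.Icc 1 n, (-1 / 2 : ℝ) ^ i = -(1 - (-1 / 2 : ℝ) ^ n) / 3 := by
  intro n
  induction n with
  | zero => simp
  | succ m ih =>
    rw [Finset.sum_Icc_succ_top (by omega), ih, pow_succ]
    ring

theorem stmt10 (τ : ℕ → ℤ) (hτ0 : τ 0 = 0) (hτe : ∀ i, τ (2 * i) = τ i)
    (hτo : ∀ i, τ (2 * i + 1) = 1 - τ i)
    (lam : ℕ → ℤ) (hlam : ∀ i, 1 ≤ i → lam i = τ i - τ (i - 1)) :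
    ∀ n : ℕ, 1 ≤ n →
      ((((Finset.Icc 1 (2 ^ n)).filter (fun i => lam i = 0)).card : ℝ) / 2 ^ n =
        -∑ i ∈ Finset.Icc 1 n, (-1 / 2 : ℝ) ^ i) := by
  intro n hn
  have hcard := card_formula τ hτ0 hτe hτo lam hlam n hn
  have hcardR : 3 * ((((Finset.Icc 1 (2 ^ n)).filter (fun i => lam i = 0)).card : ℝ))
      = 2 ^ n - (-1) ^ n := by
    exact_mod_cast congrArg (fun z : ℤ => (z : ℝ)) hcard
  rw [sum_formula n]
  have hpow : ((-1 : ℝ) / 2) ^ n = (-1) ^ n / 2 ^ n := div_pow _ _ _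
  have h2 : (0 : ℝ) < 2 ^ n := by positivity
  have hc : ((((Finset.Icc 1 (2 ^ n)).filter (fun i => lam i = 0)).card : ℝ))
      = (2 ^ n - (-1) ^ n) / 3 := by linarith
  rw [hc, hpow]
  field_simp
end

section
/- The limit as n → ∞ of (#{1 ≤ i ≤ n : λ_i = 0})/n exists and equals 1/3. -/
theorem stmt11 (τ : ℕ → ℤ) (hτ0 : τ 0 = 0) (hτe : ∀ i, τ (2 * i) = τ i)
    (hτo : ∀ i, τ (2 * i + 1) = 1 - τ i)
    (lam : ℕ → ℤ) (hlam : ∀ i, 1 ≤ i → lam i = τ i - τ (i - 1)) :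
    Filter.Tendsto
      (fun n : ℕ => (((Finset.Icc 1 n).filter (fun i => lam i = 0)).card : ℝ) / n)
      Filter.atTop (nhds (1 / 3)) := by
  classical
  -- τ takes values in {0,1}
  have tau01 : ∀ i, τ i = 0 ∨ τ i = 1 := by
    intro i
    induction i using Nat.strong_induction_on with
    | _ i ih =>
      match i, ih with
      | 0, _ => exact Or.inl hτ0
      | (n+1), ih =>
        rcases Nat.even_or_odd (n+1) with ⟨j, hj⟩ | ⟨j, hj⟩
        · have hj' : n+1 = 2*j := by omega
          rw [hj', hτe]; exact ih j (by omega)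
        · have hj' : n+1 = 2*j+1 := by omega
          rw [hj', hτo]
          rcases ih j (by omega) with h | h <;> simp [h]
  have lam_odd : ∀ j, lam (2*j+1) ≠ 0 := by
    intro j h
    have h1 : lam (2*j+1) = τ (2*j+1) - τ (2*j+1-1) := hlam _ (by omega)
    rw [show 2*j+1-1 = 2*j from rfl, hτo, hτe] at h1
    omega
  have lam_even : ∀ j, 1 ≤ j → (lam (2*j) = 0 ↔ ¬ (lam j = 0)) := by
    intro j hj
    have h1 : lam (2*j) = τ (2*j) - τ (2*j-1) := hlam _ (by omega)
    have h2 : lam j = τ j - τ (j-1) := hlam _ hj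
    have h3 : 2*j-1 = 2*(j-1)+1 := by omega
    rw [h3, hτe, hτo] at h1
    rcases tau01 j with h4 | h4 <;> rcases tau01 (j-1) with h5 | h5 <;>
      rw [h4, h5] at h1 h2 <;> constructor <;> intro <;> omega
  set a : ℕ → ℕ := fun n => ((Finset.Icc 1 n).filter (fun i => lam i = 0)).card with ha
  -- recurrence
  have key : ∀ n, a n + a (n/2) = n/2 := by
    intro n
    have himg : (Finset.Icc 1 n).filter (fun i => lam i = 0)
        = ((Finset.Icc 1 (n/2)).filter (fun j => ¬ (lam j = 0))).image (fun j => 2*j) := by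
      ext i
      simp only [Finset.mem_filter, Finset.mem_image, Finset.mem_Icc]
      constructor
      · rintro ⟨⟨h1, h2⟩, h3⟩
        rcases Nat.even_or_odd i with ⟨j, hj⟩ | ⟨j, hj⟩
        · have hji : i = 2*j := by omega
          have hj1 : 1 ≤ j := by omega
          refine ⟨j, ⟨⟨hj1, by omega⟩, ?_⟩, hji.symm⟩
          rw [hji] at h3
          exact (lam_even j hj1).mp h3
        · exfalso
          have hji : i = 2*j+1 := by omega
          rw [hji] at h3
          exact lam_odd j h3
      · rintro ⟨j, ⟨⟨h1, h2⟩, h3⟩, rfl⟩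
        exact ⟨⟨by omega, by omega⟩, (lam_even j h1).mpr h3⟩
    have hinj : Function.Injective (fun j : ℕ => 2*j) := by
      intro x y h; simp only at h; omega
    have hcard : a n = ((Finset.Icc 1 (n/2)).filter (fun j => ¬ (lam j = 0))).card := by
      rw [ha]; simp only
      rw [himg, Finset.card_image_of_injective _ hinj]
    have hsum := Finset.card_filter_add_card_filter_not
      (s := Finset.Icc 1 (n/2)) (p := fun j => lam j = 0)
    rw [Nat.card_Icc] at hsum
    rw [hcard]; simp only [ha]
    omega
  have a1 : a 1 = 0 := by
    have hl1 : lam 1 ≠ 0 := by have := lam_odd 0; simpa using this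
    rw [ha]
    simp [Finset.Icc_self, Finset.filter_singleton, hl1]
  -- error bound
  have Ebound : ∀ n, 1 ≤ n → |3*(a n : ℤ) - n| ≤ Nat.log2 n + 1 := by
    intro n
    induction n using Nat.strong_induction_on with
    | _ n ih =>
      intro hn
      rcases eq_or_lt_of_le hn with h1 | h2
      · rw [← h1]
        simp [a1]
      · -- n ≥ 2
        have hm : 1 ≤ n/2 := by omega
        have hih := ih (n/2) (by omega) hm
        have hrec := key n
        have hlog : Nat.log2 n = Nat.log2 (n/2) + 1 := by
          rw [Nat.log2_def]; simp [show 2 ≤ n by omega]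
        have hdiv : 2*(n/2) ≤ n ∧ n ≤ 2*(n/2) + 1 := by omega
        rw [hlog]
        rw [abs_le] at hih ⊢
        push_cast at hih hrec ⊢
        obtain ⟨d1, d2⟩ := hdiv
        have d1' : 2*((n/2 : ℕ) : ℤ) ≤ (n : ℤ) := by exact_mod_cast d1
        have d2' : (n : ℤ) ≤ 2*((n/2 : ℕ) : ℤ) + 1 := by exact_mod_cast d2
        constructor <;> [nlinarith [hih.1, hih.2, hrec, d1', d2'];
          nlinarith [hih.1, hih.2, hrec, d1', d2']]
  -- final limit
  have hA : Filter.Tendsto (fun x:ℝ => Real.log x / x) Filter.atTop (nhds 0) :=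
    Real.isLittleO_log_id_atTop.tendsto_div_nhds_zero
  have hB : Filter.Tendsto (fun n:ℕ => Real.log n / n) Filter.atTop (nhds 0) :=
    hA.comp tendsto_natCast_atTop_atTop
  have hC : Filter.Tendsto
      (fun n:ℕ => (1/(3*Real.log 2)) * (Real.log n / n) + (1/3) * (1/(n:ℝ)))
      Filter.atTop (nhds 0) := by
    have := (hB.const_mul (1/(3*Real.log 2))).add
      (tendsto_one_div_atTop_nhds_zero_nat.const_mul (1/3))
    simpa using this
  have hErr : Filter.Tendsto (fun n : ℕ => (a n : ℝ)/n - 1/3) Filter.atTop (nhds 0) := by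
    apply squeeze_zero_norm' (a := fun n:ℕ =>
      (1/(3*Real.log 2)) * (Real.log n / n) + (1/3) * (1/(n:ℝ))) _ hC
    filter_upwards [Filter.eventually_ge_atTop 1] with n hn
    have hn0 : (0:ℝ) < n := by exact_mod_cast hn
    have hE := Ebound n hn
    have hE' : |3*(a n : ℝ) - n| ≤ (Nat.log2 n : ℝ) + 1 := by
      exact_mod_cast hE
    have hlog2pos : (0:ℝ) < Real.log 2 := Real.log_pos (by norm_num)
    have hloglog : (Nat.log2 n : ℝ) * Real.log 2 ≤ Real.log n := by
      have h2 : (2:ℝ) ^ (Nat.log2 n) ≤ n := by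
        exact_mod_cast Nat.log2_self_le (by omega)
      calc (Nat.log2 n : ℝ) * Real.log 2 = Real.log ((2:ℝ) ^ (Nat.log2 n)) := by
            rw [Real.log_pow]
        _ ≤ Real.log n := Real.log_le_log (by positivity) h2
    have heq : (a n : ℝ)/n - 1/3 = (3*(a n : ℝ) - n) / (3*n) := by
      field_simp
    rw [Real.norm_eq_abs, heq, abs_div, abs_of_pos (show (0:ℝ) < 3*n by linarith)]
    rw [div_le_iff₀ (show (0:ℝ) < 3*n by linarith)]
    have hlogn : 0 ≤ Real.log n := Real.log_natCast_nonneg n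
    calc |3*(a n : ℝ) - n| ≤ (Nat.log2 n : ℝ) + 1 := hE'
      _ ≤ Real.log n / Real.log 2 + 1 := by
          gcongr
          rw [le_div_iff₀ hlog2pos]; exact hloglog
      _ = ((1/(3*Real.log 2)) * (Real.log n / n) + (1/3) * (1/(n:ℝ))) * (3*n) := by
          field_simp
  have := hErr.add (tendsto_const_nhds (x := (1/3 : ℝ)))
  simpa using this
end

section
/- For every α with (3 − √5)/2 < α < 1/2 there exists a positive integer n such that for every real number t having exactly one {-1,0,1} α-expansion (t_i)_{i≥1}, there are only finitely many indices k ≥ 1 with (t_k = 1 and t_{k+1} = t_{k+2} = ⋯ = t_{k+n} = 0), and only finitely many indices k ≥ 1 with (t_k = −1 and t_{k+1} = t_{k+2} = ⋯ = t_{k+n} = 0). -/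
open MeasureTheory Filter Real
open scoped MeasureTheory

noncomputable section

/-- The middle-`(1-2α)` Cantor set `Γ_α = {∑_{i≥1} ε_i α^i : ε_i ∈ {0,1}}`. -/
def Gamma (α : ℝ) : Set ℝ :=
  {x | ∃ ε : ℕ → ℝ, (∀ i, ε i = 0 ∨ ε i = 1) ∧ x = ∑' i : ℕ, ε i * α ^ (i + 1)}

/-- `a` is a `{-1,0,1}` `α`-expansion of `t`; `a i` is the digit `t_{i+1}`. -/
def IsExpansion (α t : ℝ) (a : ℕ → ℝ) : Prop :=
  (∀ i, a i = -1 ∨ a i = 0 ∨ a i = 1) ∧ t = ∑' i : ℕ, a i * α ^ (i + 1)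

/-- The set of `t` having exactly one `{-1,0,1}` `α`-expansion. -/
def uniqSet (α : ℝ) : Set ℝ := {t | ∃! a : ℕ → ℝ, IsExpansion α t a}

/-- `D_α`: possible Hausdorff dimensions of `Γ_α ∩ (Γ_α + t)` for `t ∈ u_α`. -/
def D (α : ℝ) : Set ℝ :=
  {d | ∃ t ∈ uniqSet α, d = (dimH (Gamma α ∩ ((· + t) '' Gamma α))).toReal}

namespace Stmt12Aux

variable {α : ℝ}

lemma digit_abs_le {a : ℕ → ℝ} (ha : ∀ i, a i = -1 ∨ a i = 0 ∨ a i = 1) (i : ℕ) :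
    |a i| ≤ 1 := by rcases ha i with h | h | h <;> rw [h] <;> norm_num

lemma summable_digits (hα0 : 0 < α) (hα1 : α < 1) {a : ℕ → ℝ}
    (ha : ∀ i, |a i| ≤ 1) : Summable (fun i => a i * α ^ (i + 1)) := by
  apply Summable.of_norm_bounded (g := fun i => α ^ (i + 1))
  · have : Summable (fun i : ℕ => α ^ i * α) :=
      (summable_geometric_of_lt_one hα0.le hα1).mul_right α
    simpa [pow_succ] using this
  · intro i
    have h1 : (0:ℝ) ≤ α ^ (i+1) := pow_nonneg hα0.le _
    have := ha i
    rw [Real.norm_eq_abs, abs_mul, abs_of_nonneg h1]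
    nlinarith [abs_nonneg (a i)]

lemma tsum_geom_succ (hα0 : 0 < α) (hα1 : α < 1) :
    ∑' i : ℕ, α ^ (i + 1) = α / (1 - α) := by
  have : ∑' i : ℕ, α ^ i * α = (∑' i : ℕ, α ^ i) * α := tsum_mul_right
  rw [tsum_geometric_of_lt_one hα0.le hα1] at this
  have h2 : (fun i : ℕ => α ^ (i+1)) = fun i : ℕ => α ^ i * α := by
    funext i; rw [pow_succ]
  rw [h2, this]
  field_simp

lemma tail_bound (hα0 : 0 < α) (hα1 : α < 1) {a : ℕ → ℝ}
    (ha : ∀ i, |a i| ≤ 1) : |∑' i, a i * α ^ (i + 1)| ≤ α / (1 - α) := by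
  have hs := summable_digits hα0 hα1 ha
  have hg : Summable (fun i : ℕ => α ^ (i+1)) := by
    have : Summable (fun i : ℕ => α ^ i * α) :=
      (summable_geometric_of_lt_one hα0.le hα1).mul_right α
    simpa [pow_succ] using this
  have h1 : ‖∑' i, a i * α ^ (i + 1)‖ ≤ ∑' i, ‖a i * α ^ (i + 1)‖ := by
    exact norm_tsum_le_tsum_norm (by simpa only [Real.norm_eq_abs] using hs.abs)
  have h2 : ∑' i, ‖a i * α ^ (i + 1)‖ ≤ ∑' i : ℕ, α ^ (i + 1) := by
    apply Summable.tsum_le_tsum _ (by simpa only [Real.norm_eq_abs] using hs.abs) hg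
    intro i
    have h3 : (0:ℝ) ≤ α ^ (i+1) := pow_nonneg hα0.le _
    rw [Real.norm_eq_abs, abs_mul, abs_of_nonneg h3]
    nlinarith [abs_nonneg (a i), ha i]
  calc |∑' i, a i * α ^ (i + 1)| ≤ ∑' i : ℕ, α ^ (i + 1) := le_trans h1 h2
    _ = α / (1 - α) := tsum_geom_succ hα0 hα1

/-- Tail recursion: `T m = α (a m + T (m+1))` where `T m = ∑' i, a (m+i) α^{i+1}`. -/
lemma tail_rec (hα0 : 0 < α) (hα1 : α < 1) {a : ℕ → ℝ}
    (ha : ∀ i, |a i| ≤ 1) (m : ℕ) :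
    ∑' i, a (m + i) * α ^ (i + 1)
      = α * (a m + ∑' i, a (m + 1 + i) * α ^ (i + 1)) := by
  have hs : Summable (fun i => a (m + i) * α ^ (i + 1)) :=
    summable_digits hα0 hα1 (fun i => ha (m + i))
  rw [Summable.tsum_eq_zero_add hs]
  have h3 : ∑' (b : ℕ), a (m + (b + 1)) * α ^ (b + 1 + 1)
      = α * ∑' i, a (m + 1 + i) * α ^ (i + 1) := by
    rw [← tsum_mul_left]
    apply tsum_congr
    intro i
    have h : m + (i + 1) = m + 1 + i := by omega
    rw [h]; ring
  rw [h3, mul_add]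
  congr 1
  ring

/-- Every `x` with `|x| ≤ α/(1-α)` has a `{-1,0,1}` expansion, provided `1/3 ≤ α < 1`. -/
lemma exists_expansion' (hα0 : 0 < α) (h3 : 1/3 ≤ α) (hα1 : α < 1) (x : ℝ)
    (hx : |x| ≤ α / (1 - α)) :
    ∃ d : ℕ → ℝ, (∀ i, d i = -1 ∨ d i = 0 ∨ d i = 1) ∧ x = ∑' i, d i * α ^ (i + 1) := by
  classical
  have h1α : 0 < 1 - α := by linarith
  set L : ℝ := α / (1 - α) with hL
  have hLpos : 0 < L := div_pos hα0 h1α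
  have hLhalf : (1:ℝ)/2 ≤ L := by
    rw [hL, le_div_iff₀ h1α]; linarith
  have hLα : (1 + L) * α = L := by
    rw [hL]; field_simp; ring
  let dg : ℝ → ℝ := fun z => if L < z / α then 1 else if z / α < -L then -1 else 0
  let y : ℕ → ℝ := fun n => Nat.rec x (fun _ z => z / α - dg z) n
  have hy0 : y 0 = x := rfl
  have hys : ∀ n, y (n + 1) = y n / α - dg (y n) := fun n => rfl
  have hdig : ∀ z : ℝ, dg z = -1 ∨ dg z = 0 ∨ dg z = 1 := by
    intro z
    by_cases h : L < z / α
    · right; right; simp [dg, h]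
    · by_cases h' : z / α < -L
      · left; simp [dg, h, h']
      · right; left; simp [dg, h, h']
  -- invariant
  have hinv : ∀ n, |y n| ≤ L := by
    intro n
    induction n with
    | zero => simpa [hy0] using hx
    | succ n ih =>
      rw [hys]
      rw [abs_le] at ih ⊢
      by_cases h : L < y n / α
      · have hdg1 : dg (y n) = 1 := by simp [dg, h]
        rw [hdg1]
        have hub : y n / α ≤ 1 + L := by
          rw [div_le_iff₀ hα0]
          calc y n ≤ L := ih.2
            _ = (1 + L) * α := hLα.symm
        constructor <;> [linarith; linarith]
      · by_cases h' : y n / α < -L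
        · have hdg1 : dg (y n) = -1 := by simp [dg, h, h']
          rw [hdg1]
          have hub : -(1 + L) ≤ y n / α := by
            rw [le_div_iff₀ hα0]
            calc -(1 + L) * α = -L := by linarith [hLα]
              _ ≤ y n := ih.1
          constructor <;> [linarith; linarith]
        · have hdg1 : dg (y n) = 0 := by simp [dg, h, h']
          rw [hdg1]
          push_neg at h h'
          constructor <;> linarith
  -- partial sums
  have hp : ∀ m, x = (∑ i ∈ Finset.range m, dg (y i) * α ^ (i + 1)) + α ^ m * y m := by
    intro m
    induction m with
    | zero => simp [hy0]
    | succ m ih =>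
      have h := hys m
      have h2 : α * y (m + 1) = y m - α * dg (y m) := by
        rw [h]; field_simp
      have key : α ^ m * y m = dg (y m) * α ^ (m + 1) + α ^ (m + 1) * y (m + 1) := by
        linear_combination (-(α ^ m : ℝ)) * h2
      rw [Finset.sum_range_succ]
      linarith [key, ih]
  refine ⟨fun i => dg (y i), fun i => hdig (y i), ?_⟩
  have habs : ∀ i, |dg (y i)| ≤ 1 := by
    intro i; rcases hdig (y i) with h | h | h <;> rw [h] <;> norm_num
  have hsum : Summable (fun i => dg (y i) * α ^ (i + 1)) :=
    summable_digits hα0 hα1 habs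
  have htend1 : Tendsto (fun m => ∑ i ∈ Finset.range m, dg (y i) * α ^ (i + 1))
      atTop (nhds (∑' i, dg (y i) * α ^ (i + 1))) := hsum.hasSum.tendsto_sum_nat
  have htend2 : Tendsto (fun m => ∑ i ∈ Finset.range m, dg (y i) * α ^ (i + 1))
      atTop (nhds x) := by
    have h0 : Tendsto (fun m : ℕ => α ^ m * y m) atTop (nhds 0) := by
      apply squeeze_zero_norm (a := fun m : ℕ => α ^ m * L)
      · intro m
        rw [Real.norm_eq_abs, abs_mul, abs_of_nonneg (pow_nonneg hα0.le m)]
        exact mul_le_mul_of_nonneg_left (hinv m) (pow_nonneg hα0.le m)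
      · simpa using (tendsto_pow_atTop_nhds_zero_of_lt_one hα0.le hα1).mul_const L
    have heq : (fun m => ∑ i ∈ Finset.range m, dg (y i) * α ^ (i + 1))
        = fun m => x - α ^ m * y m := by
      funext m
      have := hp m
      linarith
    rw [heq]
    simpa using tendsto_const_nhds.sub h0
  exact tendsto_nhds_unique htend2 htend1

/-- If a digit `a m` is not `1` and the tail after it is at least `(1-2α)/(1-α)`,
then `t` has a second expansion. -/
lemma second_expansion (hα0 : 0 < α) (h3 : 1/3 ≤ α) (hα1 : α < 1)
    {t : ℝ} {a : ℕ → ℝ} (hexp : IsExpansion α t a) (m : ℕ) (ham : a m ≠ 1)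
    (hT : (1 - 2*α)/(1 - α) ≤ ∑' i, a (m + 1 + i) * α ^ (i + 1)) :
    ∃ b, IsExpansion α t b ∧ b ≠ a := by
  classical
  obtain ⟨hdig, ht⟩ := hexp
  have habs := digit_abs_le hdig
  have h1α : 0 < 1 - α := by linarith
  set T : ℝ := ∑' i, a (m + 1 + i) * α ^ (i + 1) with hTdef
  have hTb : |T| ≤ α / (1 - α) :=
    tail_bound hα0 hα1 (fun i => habs (m + 1 + i))
  set x : ℝ := T - 1 with hxdef
  have hcL : (1 - 2*α)/(1 - α) - 1 = -(α / (1 - α)) := by field_simp; ring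
  have hx : |x| ≤ α / (1 - α) := by
    rw [abs_le] at hTb ⊢
    constructor
    · rw [hxdef]; linarith [hT, hcL]
    · rw [hxdef]
      have : 0 < α / (1 - α) := div_pos hα0 h1α
      linarith [hTb.2]
  obtain ⟨d, hd, hdx⟩ := exists_expansion' hα0 h3 hα1 x hx
  set b : ℕ → ℝ := fun i =>
    if i < m then a i else if i = m then a m + 1 else d (i - (m + 1)) with hbdef
  have hbm : b m = a m + 1 := by simp [hbdef]
  have hblt : ∀ i, i < m → b i = a i := by intro i hi; simp [hbdef, hi]
  have hbtail : ∀ i, b (i + (m + 1)) = d i := by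
    intro i
    have h1 : ¬ (i + (m + 1) < m) := by omega
    have h2 : ¬ (i + (m + 1) = m) := by omega
    have h3' : i + (m + 1) - (m + 1) = i := by omega
    simp [hbdef, h1, h2, h3']
  have hbdig : ∀ i, b i = -1 ∨ b i = 0 ∨ b i = 1 := by
    intro i
    by_cases hi : i < m
    · rw [hblt i hi]; exact hdig i
    · by_cases hi' : i = m
      · subst hi'
        rw [hbm]
        rcases hdig i with h | h | h
        · right; left; rw [h]; ring
        · right; right; rw [h]; ring
        · exact absurd h ham
      · have h1 : ¬ (i < m) := hi
        have : b i = d (i - (m + 1)) := by simp [hbdef, h1, hi']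
        rw [this]; exact hd _
  have hbabs := digit_abs_le hbdig
  have hsa : Summable (fun i => a i * α ^ (i + 1)) := summable_digits hα0 hα1 habs
  have hsb : Summable (fun i => b i * α ^ (i + 1)) := summable_digits hα0 hα1 hbabs
  have hta : (∑ i ∈ Finset.range (m+1), a i * α ^ (i + 1))
      + ∑' i, a (i + (m+1)) * α ^ ((i + (m+1)) + 1) = ∑' i, a i * α ^ (i + 1) :=
    Summable.sum_add_tsum_nat_add (m+1) hsa
  have htb : (∑ i ∈ Finset.range (m+1), b i * α ^ (i + 1))
      + ∑' i, b (i + (m+1)) * α ^ ((i + (m+1)) + 1) = ∑' i, b i * α ^ (i + 1) :=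
    Summable.sum_add_tsum_nat_add (m+1) hsb
  -- tails
  have htaila : ∑' i, a (i + (m+1)) * α ^ ((i + (m+1)) + 1) = α ^ (m+1) * T := by
    rw [hTdef, ← tsum_mul_left]
    apply tsum_congr
    intro i
    have h : i + (m + 1) = m + 1 + i := by omega
    rw [h, pow_add]
    ring
  have htailb : ∑' i, b (i + (m+1)) * α ^ ((i + (m+1)) + 1) = α ^ (m+1) * x := by
    rw [hdx, ← tsum_mul_left]
    apply tsum_congr
    intro i
    rw [hbtail i, pow_add]
    ring
  -- heads
  have hhead : ∑ i ∈ Finset.range (m+1), b i * α ^ (i + 1)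
      = (∑ i ∈ Finset.range (m+1), a i * α ^ (i + 1)) + α ^ (m + 1) := by
    rw [Finset.sum_range_succ, Finset.sum_range_succ]
    have : ∑ i ∈ Finset.range m, b i * α ^ (i + 1)
        = ∑ i ∈ Finset.range m, a i * α ^ (i + 1) := by
      apply Finset.sum_congr rfl
      intro i hi
      rw [hblt i (Finset.mem_range.mp hi)]
    rw [this, hbm]
    ring
  refine ⟨b, ⟨hbdig, ?_⟩, ?_⟩
  · rw [← htb, htailb, hhead, hxdef, ht, ← hta, htaila]
    ring
  · intro h
    have := congrFun h m
    rw [hbm] at this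
    linarith [this]

/-- Key subsingleton lemma. -/
lemma key_sub (hα0 : 0 < α) (h3 : 1/3 ≤ α) (hα2 : α < 1/2) (n : ℕ) (hn : 0 < n)
    (hnc : α ^ (n+1) / (1 - α) ≤ α - (1 - 2*α)/(1 - α))
    {t : ℝ} {a : ℕ → ℝ} (hexp : IsExpansion α t a)
    (huniq : ∀ b : ℕ → ℝ, IsExpansion α t b → b = a) :
    {k : ℕ | a k = 1 ∧ ∀ j < n, a (k + 1 + j) = 0}.Subsingleton := by
  have hα1 : α < 1 := by linarith
  have h1α : 0 < 1 - α := by linarith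
  obtain ⟨hdig, ht⟩ := hexp
  have habs := digit_abs_le hdig
  set c : ℝ := (1 - 2*α)/(1 - α) with hc
  have hc0 : 0 ≤ c := by
    rw [hc]; apply div_nonneg <;> linarith
  have hcα : c ≤ α := by
    have h0 : 0 ≤ α ^ (n+1) / (1 - α) := by positivity
    linarith [hnc]
  -- forcing: all digits below a pattern position equal 1
  have force : ∀ k, (a k = 1 ∧ ∀ j < n, a (k + 1 + j) = 0) →
      ∀ j m, m + j = k → a m = 1 ∧ c ≤ ∑' i, a (m + i) * α ^ (i + 1) := by
    intro k hk
    -- bound on the tail after the zeros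
    have hzero_tail : |∑' i, a (k + 1 + i) * α ^ (i + 1)| ≤ α ^ (n+1) / (1 - α) := by
      have hs : Summable (fun i => a (k + 1 + i) * α ^ (i + 1)) :=
        summable_digits hα0 hα1 (fun i => habs (k + 1 + i))
      have hsplit : (∑ i ∈ Finset.range n, a (k + 1 + i) * α ^ (i + 1))
          + ∑' i, a (k + 1 + (i + n)) * α ^ ((i + n) + 1)
          = ∑' i, a (k + 1 + i) * α ^ (i + 1) := Summable.sum_add_tsum_nat_add n hs
      have hhz : ∑ i ∈ Finset.range n, a (k + 1 + i) * α ^ (i + 1) = 0 := by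
        apply Finset.sum_eq_zero
        intro i hi
        rw [hk.2 i (Finset.mem_range.mp hi)]
        ring
      have htl : ∑' i, a (k + 1 + (i + n)) * α ^ ((i + n) + 1)
          = α ^ n * ∑' i, a (k + 1 + n + i) * α ^ (i + 1) := by
        rw [← tsum_mul_left]
        apply tsum_congr
        intro i
        have h : k + 1 + (i + n) = k + 1 + n + i := by omega
        rw [h, pow_add]
        ring
      have hb2 : |∑' i, a (k + 1 + n + i) * α ^ (i + 1)| ≤ α / (1 - α) :=
        tail_bound hα0 hα1 (fun i => habs (k + 1 + n + i))
      have : ∑' i, a (k + 1 + i) * α ^ (i + 1)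
          = α ^ n * ∑' i, a (k + 1 + n + i) * α ^ (i + 1) := by
        rw [← hsplit, hhz, htl]; ring
      rw [this, abs_mul, abs_of_nonneg (pow_nonneg hα0.le n)]
      calc α ^ n * |∑' i, a (k + 1 + n + i) * α ^ (i + 1)|
          ≤ α ^ n * (α / (1 - α)) :=
            mul_le_mul_of_nonneg_left hb2 (pow_nonneg hα0.le n)
        _ = α ^ (n+1) / (1 - α) := by rw [pow_succ]; ring
    intro j
    induction j with
    | zero =>
      intro m hm
      simp only [Nat.add_zero] at hm
      subst hm
      refine ⟨hk.1, ?_⟩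
      have hrec := tail_rec hα0 hα1 habs m
      rw [hrec, hk.1]
      have hz := hzero_tail
      rw [abs_le] at hz
      nlinarith [hz.1, hnc, hα0, hα1]
    | succ j ih =>
      intro m hm
      have hm' : (m + 1) + j = k := by omega
      obtain ⟨ih1, ih2⟩ := ih (m + 1) hm'
      have ham : a m = 1 := by
        by_contra ham
        obtain ⟨b, hb, hbne⟩ :=
          second_expansion hα0 h3 hα1 ⟨hdig, ht⟩ m ham (by rw [← hc]; exact ih2)
        exact hbne (huniq b hb)
      refine ⟨ham, ?_⟩
      have hrec := tail_rec hα0 hα1 habs m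
      rw [hrec, ham]
      nlinarith [ih2, hα0, hcα, hc0]
  -- now conclude subsingleton
  have aux : ∀ k k' : ℕ, (a k = 1 ∧ ∀ j < n, a (k + 1 + j) = 0) →
      (a k' = 1 ∧ ∀ j < n, a (k' + 1 + j) = 0) → k < k' → False := by
    intro k k' hk hk' hlt
    have h1 : a (k + 1) = 1 := by
      have := force k' hk' (k' - (k+1)) (k + 1) (by omega)
      exact this.1
    have h2 : a (k + 1) = 0 := by
      have := hk.2 0 hn
      simpa using this
    rw [h1] at h2
    norm_num at h2
  intro k hk k' hk'
  rcases lt_trichotomy k k' with h | h | h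
  · exact absurd (aux k k' hk hk' h) (by simp)
  · exact h
  · exact absurd (aux k' k hk' hk h) (by simp)

end Stmt12Aux

theorem stmt12 (α : ℝ) (hα1 : (3 - Real.sqrt 5) / 2 < α) (hα2 : α < 1 / 2) :
    ∃ n : ℕ, 0 < n ∧ ∀ (t : ℝ) (a : ℕ → ℝ), IsExpansion α t a →
      (∀ b : ℕ → ℝ, IsExpansion α t b → b = a) →
      {k : ℕ | a k = 1 ∧ ∀ j < n, a (k + 1 + j) = 0}.Finite ∧
      {k : ℕ | a k = -1 ∧ ∀ j < n, a (k + 1 + j) = 0}.Finite := by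
  have hs5 : Real.sqrt 5 ^ 2 = 5 := Real.sq_sqrt (by norm_num)
  have hs5nn : 0 ≤ Real.sqrt 5 := Real.sqrt_nonneg 5
  have h3 : 1/3 ≤ α := by nlinarith
  have hα0 : 0 < α := by nlinarith
  have hα1' : α < 1 := by linarith
  have h1α : 0 < 1 - α := by linarith
  set c : ℝ := (1 - 2*α)/(1 - α) with hc
  have hcα : c < α := by
    rw [hc, div_lt_iff₀ h1α]
    nlinarith
  -- choose n
  have hεpos : 0 < (α - c) * (1 - α) := by nlinarith
  obtain ⟨n0, hn0⟩ := exists_pow_lt_of_lt_one hεpos hα1'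
  set n : ℕ := n0 + 1 with hndef
  have hnpos : 0 < n := Nat.succ_pos n0
  have hnc : α ^ (n+1) / (1 - α) ≤ α - c := by
    rw [div_le_iff₀ h1α]
    have h1 : α ^ (n+1) ≤ α ^ n0 := pow_le_pow_of_le_one hα0.le hα1'.le (by omega)
    nlinarith [hn0]
  refine ⟨n, hnpos, ?_⟩
  intro t a hexp huniq
  constructor
  · exact (Stmt12Aux.key_sub hα0 h3 hα2 n hnpos hnc hexp huniq).finite
  · -- negative digits: apply the result to `-a`, `-t`
    have hexp' : IsExpansion α (-t) (fun i => -a i) := by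
      constructor
      · intro i
        rcases hexp.1 i with h | h | h
        · right; right; show -a i = 1; rw [h]; ring
        · right; left; show -a i = 0; rw [h]; ring
        · left; show -a i = -1; rw [h]
      · rw [hexp.2, ← tsum_neg]
        apply tsum_congr
        intro i
        ring
    have huniq' : ∀ b : ℕ → ℝ, IsExpansion α (-t) b → b = fun i => -a i := by
      intro b hb
      have hb' : IsExpansion α t (fun i => -b i) := by
        constructor
        · intro i
          rcases hb.1 i with h | h | h
          · right; right; show -b i = 1; rw [h]; ring
          · right; left; show -b i = 0; rw [h]; ring
          · left; show -b i = -1; rw [h]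
        · have := hb.2
          have h2 : t = -∑' i, b i * α ^ (i + 1) := by rw [← this]; ring
          rw [h2, ← tsum_neg]
          apply tsum_congr
          intro i
          ring
      have := huniq _ hb'
      funext i
      have h : -b i = a i := congrFun this i
      show b i = -a i
      linarith [h]
    have hset : {k : ℕ | a k = -1 ∧ ∀ j < n, a (k + 1 + j) = 0}
        = {k : ℕ | (fun i => -a i) k = 1 ∧ ∀ j < n, (fun i => -a i) (k + 1 + j) = 0} := by
      ext k
      simp only [Set.mem_setOf_eq]
      constructor
      · rintro ⟨h1, h2⟩
        refine ⟨show -a k = 1 by rw [h1]; ring,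
          fun j hj => show -a (k+1+j) = 0 by rw [h2 j hj]; ring⟩
      · rintro ⟨h1, h2⟩
        have h1' : -a k = 1 := h1
        constructor
        · linarith [h1']
        · intro j hj
          have h2' : -a (k+1+j) = 0 := h2 j hj
          linarith [h2']
    rw [hset]
    exact (Stmt12Aux.key_sub hα0 h3 hα2 n hnpos hnc hexp' huniq').finite
end
end

section
/- Let α satisfy 1/3 < α ≤ (3 − √5)/2 and let (n_k)_{k≥1} be any sequence of positive integers. Let (t_i)_{i≥1} be the sequence obtained by concatenating, for k = 1, 2, 3, …, the block (1,−1) repeated n_{2k−1} times followed by the block (0) repeated n_{2k} times. Then the real number t = ∑_{i=1}^∞ t_i α^i has exactly one {-1,0,1} α-expansion, namely (t_i)_{i≥1}. -/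
open MeasureTheory Filter Real
open scoped MeasureTheory

noncomputable section

namespace Stmt13Aux


inductive IsBlockSeq : List ℝ → Prop
  | nil : IsBlockSeq []
  | pair (l) : IsBlockSeq l → IsBlockSeq (l ++ [1, -1])
  | zero (l) : IsBlockSeq l → IsBlockSeq (l ++ [0])

lemma IsBlockSeq.mem_cases {l : List ℝ} (h : IsBlockSeq l) :
    ∀ x ∈ l, x = -1 ∨ x = 0 ∨ x = 1 := by
  induction h with
  | nil => simp
  | pair l _ ih =>
    intro x hx
    rcases List.mem_append.1 hx with h' | h'
    · exact ih x h'
    · simp at h'; rcases h' with h' | h' <;> simp [h']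
  | zero l _ ih =>
    intro x hx
    rcases List.mem_append.1 hx with h' | h'
    · exact ih x h'
    · simp at h'; simp [h']

lemma IsBlockSeq.getD_mem {l : List ℝ} (h : IsBlockSeq l) (i : ℕ) :
    l.getD i 0 = -1 ∨ l.getD i 0 = 0 ∨ l.getD i 0 = 1 := by
  rcases lt_or_ge i l.length with hi | hi
  · rw [List.getD_eq_getElem l 0 hi]
    exact h.mem_cases _ (List.getElem_mem hi)
  · rw [List.getD_eq_default l 0 hi]; simp

lemma IsBlockSeq.last_ne_one {l : List ℝ} (h : IsBlockSeq l) (i : ℕ) (hi : i + 1 = l.length) :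
    l.getD i 0 ≠ 1 := by
  induction h with
  | nil => simp at hi
  | pair l hbs ih =>
    have hlen : (l ++ [(1:ℝ), -1]).length = l.length + 2 := by simp
    rw [List.getD_append_right _ _ _ _ (by omega)]
    have : i - l.length = 1 := by omega
    rw [this]
    norm_num
  | zero l hbs ih =>
    have hlen : (l ++ [(0:ℝ)]).length = l.length + 1 := by simp
    rw [List.getD_append_right _ _ _ _ (by omega)]
    have : i - l.length = 0 := by omega
    rw [this]
    norm_num

lemma IsBlockSeq.succ_iff {l : List ℝ} (h : IsBlockSeq l) :
    ∀ i, i + 1 < l.length → (l.getD (i+1) 0 = -1 ↔ l.getD i 0 = 1) := by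
  induction h with
  | nil => simp
  | pair l hbs ih =>
    intro i hi
    have hlen : (l ++ [(1:ℝ), -1]).length = l.length + 2 := by simp
    rcases lt_trichotomy (i+1) l.length with hc | hc | hc
    · rw [List.getD_append _ _ _ _ hc, List.getD_append _ _ _ _ (by omega)]
      exact ih i hc
    · have e1 : (l ++ [(1:ℝ), -1]).getD (i+1) 0 = 1 := by
        rw [List.getD_append_right _ _ _ _ (by omega)]
        have : i + 1 - l.length = 0 := by omega
        rw [this]; rfl
      have e2 : (l ++ [(1:ℝ), -1]).getD i 0 = l.getD i 0 :=
        List.getD_append _ _ _ _ (by omega)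
      rw [e1, e2]
      have hne := hbs.last_ne_one i (by omega)
      constructor
      · intro hx; norm_num at hx
      · intro hx; exact absurd hx hne
    · have hi1 : i + 1 = l.length + 1 := by omega
      have e1 : (l ++ [(1:ℝ), -1]).getD (i+1) 0 = -1 := by
        rw [List.getD_append_right _ _ _ _ (by omega)]
        have : i + 1 - l.length = 1 := by omega
        rw [this]; rfl
      have e2 : (l ++ [(1:ℝ), -1]).getD i 0 = 1 := by
        rw [List.getD_append_right _ _ _ _ (by omega)]
        have : i - l.length = 0 := by omega
        rw [this]; rfl
      rw [e1, e2]; simp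
  | zero l hbs ih =>
    intro i hi
    have hlen : (l ++ [(0:ℝ)]).length = l.length + 1 := by simp
    rcases lt_or_ge (i+1) l.length with hc | hc
    · rw [List.getD_append _ _ _ _ hc, List.getD_append _ _ _ _ (by omega)]
      exact ih i hc
    · have hc' : i + 1 = l.length := by omega
      have e1 : (l ++ [(0:ℝ)]).getD (i+1) 0 = 0 := by
        rw [List.getD_append_right _ _ _ _ (by omega)]
        have : i + 1 - l.length = 0 := by omega
        rw [this]; rfl
      have e2 : (l ++ [(0:ℝ)]).getD i 0 = l.getD i 0 :=
        List.getD_append _ _ _ _ (by omega)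
      rw [e1, e2]
      have hne := hbs.last_ne_one i (by omega)
      constructor
      · intro hx; norm_num at hx
      · intro hx; exact absurd hx hne

lemma blockseq_append_pairs {l : List ℝ} (h : IsBlockSeq l) (p : ℕ) :
    IsBlockSeq (l ++ (List.replicate p [(1:ℝ), -1]).flatten) := by
  induction p generalizing l with
  | zero => simpa using h
  | succ p ih =>
    have e : l ++ (List.replicate (p+1) [(1:ℝ), -1]).flatten
        = (l ++ [1, -1]) ++ (List.replicate p [(1:ℝ), -1]).flatten := by
      simp [List.replicate_succ]
    rw [e]
    exact ih (h.pair l)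

lemma blockseq_append_zeros {l : List ℝ} (h : IsBlockSeq l) (q : ℕ) :
    IsBlockSeq (l ++ List.replicate q (0:ℝ)) := by
  induction q generalizing l with
  | zero => simpa using h
  | succ q ih =>
    have e : l ++ List.replicate (q+1) (0:ℝ) = (l ++ [0]) ++ List.replicate q (0:ℝ) := by
      simp [List.replicate_succ]
    rw [e]
    exact ih (h.zero l)

lemma length_flatten_pairs (p : ℕ) :
    ((List.replicate p [(1:ℝ), -1]).flatten).length = 2 * p := by
  induction p with
  | zero => simp
  | succ p ih => simp [List.replicate_succ, ih]; omega



/-- `Yt α c m = ∑_{j≥0} c_{m+j} α^j`, the normalized tail of the series. -/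
noncomputable def Yt (α : ℝ) (c : ℕ → ℝ) (m : ℕ) : ℝ := ∑' j : ℕ, c (m + j) * α ^ j

lemma summable_tail {α : ℝ} (hα0 : 0 ≤ α) (hα1 : α < 1) {c : ℕ → ℝ}
    (hc : ∀ i, |c i| ≤ 1) (m : ℕ) : Summable fun j : ℕ => c (m + j) * α ^ j := by
  apply Summable.of_norm_bounded (g := fun j => α ^ j) (summable_geometric_of_lt_one hα0 hα1)
  intro j
  rw [Real.norm_eq_abs, abs_mul, abs_pow, abs_of_nonneg hα0]
  calc |c (m + j)| * α ^ j ≤ 1 * α ^ j := by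
        exact mul_le_mul_of_nonneg_right (hc _) (pow_nonneg hα0 _)
    _ = α ^ j := one_mul _

lemma Yt_abs_le {α : ℝ} (hα0 : 0 ≤ α) (hα1 : α < 1) {c : ℕ → ℝ}
    (hc : ∀ i, |c i| ≤ 1) (m : ℕ) : |Yt α c m| ≤ (1 - α)⁻¹ := by
  have hs := summable_tail hα0 hα1 hc m
  have hsn : Summable fun j : ℕ => ‖c (m + j) * α ^ j‖ := by
    simp only [Real.norm_eq_abs]
    exact hs.abs
  have h1 : ‖Yt α c m‖ ≤ ∑' j : ℕ, ‖c (m + j) * α ^ j‖ := norm_tsum_le_tsum_norm hsn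
  have h2 : ∑' j : ℕ, ‖c (m + j) * α ^ j‖ ≤ ∑' j : ℕ, α ^ j := by
    apply Summable.tsum_le_tsum _ hsn (summable_geometric_of_lt_one hα0 hα1)
    intro j
    rw [Real.norm_eq_abs, abs_mul, abs_pow, abs_of_nonneg hα0]
    calc |c (m + j)| * α ^ j ≤ 1 * α ^ j :=
        mul_le_mul_of_nonneg_right (hc _) (pow_nonneg hα0 _)
      _ = α ^ j := one_mul _
  rw [tsum_geometric_of_lt_one hα0 hα1] at h2
  rw [← Real.norm_eq_abs]
  exact h1.trans h2

lemma Yt_shift {α : ℝ} (hα0 : 0 ≤ α) (hα1 : α < 1) {c : ℕ → ℝ}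
    (hc : ∀ i, |c i| ≤ 1) (m : ℕ) : Yt α c m = c m + α * Yt α c (m + 1) := by
  have hs := summable_tail hα0 hα1 hc m
  rw [Yt, Summable.tsum_eq_zero_add hs]
  simp only [add_zero, pow_zero, mul_one]
  congr 1
  rw [Yt, ← tsum_mul_left]
  apply tsum_congr
  intro j
  rw [show m + (j + 1) = m + 1 + j from by omega]
  ring

lemma Yt_zero_run {α : ℝ} (hα0 : 0 ≤ α) (hα1 : α < 1) {c : ℕ → ℝ}
    (hc : ∀ i, |c i| ≤ 1) (m q : ℕ) (h0 : ∀ i, i < q → c (m + i) = 0) :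
    Yt α c m = α ^ q * Yt α c (m + q) := by
  induction q generalizing m with
  | zero => simp
  | succ q ih =>
    have hcm : c m = 0 := by have := h0 0 (by omega); simpa using this
    rw [Yt_shift hα0 hα1 hc m, hcm,
      ih (m + 1) (fun i hi => by
        have := h0 (i + 1) (by omega)
        rwa [show m + (i + 1) = m + 1 + i from by omega] at this),
      show m + 1 + q = m + (q + 1) from by omega]
    ring


section Bounds


variable {α : ℝ} {a : ℕ → ℝ}

/-- Bounds for tails starting at a position whose digit is not `-1`. -/
lemma ac_bound (hα0 : 0 < α) (hαh : α < 1/2)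
    (hd : ∀ i, a i = -1 ∨ a i = 0 ∨ a i = 1)
    (hs : ∀ i, (a (i+1) = -1 ↔ a i = 1)) :
    ∀ m, a m ≠ -1 → 0 ≤ Yt α a m ∧ Yt α a m ≤ 1/(1+α) := by
  have hα1 : α < 1 := by linarith
  have habs : ∀ i, |a i| ≤ 1 := by
    intro i; rcases hd i with h | h | h <;> rw [h] <;> norm_num
  have hb2 : (1 - α)⁻¹ ≤ 2 := by
    rw [inv_le_comm₀ (by linarith) (by norm_num)]
    linarith
  have hβ : 0 < 1/(1+α) := by positivity
  have key : ∀ j m, a m ≠ -1 →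
      -(2*α^j) ≤ Yt α a m ∧ Yt α a m ≤ 1/(1+α) + 2*α^j := by
    intro j
    induction j with
    | zero =>
      intro m hm
      have h := abs_le.1 (Yt_abs_le hα0.le hα1 habs m)
      constructor
      · simp only [pow_zero, mul_one]; linarith [h.1]
      · simp only [pow_zero, mul_one]; linarith [h.2, hβ.le]
    | succ j ih =>
      intro m hm
      have hpj : (0:ℝ) ≤ α^j := pow_nonneg hα0.le j
      have hpj1 : (0:ℝ) ≤ α^(j+1) := pow_nonneg hα0.le (j+1)
      have hps : α^(j+1) = α^j * α := pow_succ α j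
      have hps2 : α^(j+2) = α^(j+1) * α := pow_succ α (j+1)
      rcases hd m with h | h | h
      · exact absurd h hm
      · -- a m = 0
        have hm1 : a (m+1) ≠ -1 := by
          intro hc
          have := (hs m).1 hc
          rw [h] at this; norm_num at this
        have e := Yt_shift hα0.le hα1 habs m
        rw [h] at e
        obtain ⟨l1, l2⟩ := ih (m+1) hm1
        constructor
        · nlinarith [mul_le_mul_of_nonneg_left l1 hα0.le]
        · nlinarith [mul_le_mul_of_nonneg_left l2 hα0.le, hβ]
      · -- a m = 1
        have h1 : a (m+1) = -1 := (hs m).2 h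
        have h2 : a (m+2) ≠ -1 := by
          intro hc
          have := (hs (m+1)).1 hc
          rw [h1] at this; norm_num at this
        have e1 := Yt_shift hα0.le hα1 habs m
        have e2 := Yt_shift hα0.le hα1 habs (m+1)
        rw [h] at e1; rw [h1] at e2
        have e : Yt α a m = 1 - α + α^2 * Yt α a (m+2) := by
          rw [e1, e2]; ring
        obtain ⟨l1, l2⟩ := ih (m+2) h2
        have hsq : (0:ℝ) ≤ α^2 := sq_nonneg α
        have hkey : 1 - α + α^2 * (1/(1+α)) = 1/(1+α) := by
          field_simp
          ring
        constructor
        · nlinarith [mul_le_mul_of_nonneg_left l1 hsq]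
        · nlinarith [mul_le_mul_of_nonneg_left l2 hsq, hβ, hkey,
            mul_le_mul_of_nonneg_left hα1.le hpj1]
  intro m hm
  have t0 : Filter.Tendsto (fun j : ℕ => 2*α^j) Filter.atTop (nhds 0) := by
    have := (tendsto_pow_atTop_nhds_zero_of_lt_one hα0.le hα1).const_mul 2
    simpa using this
  constructor
  · have := le_of_tendsto' t0.neg (fun j => (key j m hm).1)
    simpa using this
  · have tβ : Filter.Tendsto (fun j : ℕ => 1/(1+α) + 2*α^j) Filter.atTop (nhds (1/(1+α))) := by
      have := t0.const_add (1/(1+α))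
      simpa using this
    exact ge_of_tendsto' tβ (fun j => (key j m hm).2)

/-- Strict positivity of tails at non-`-1` positions. -/
lemma ac_pos (hα0 : 0 < α) (hαh : α < 1/2)
    (hd : ∀ i, a i = -1 ∨ a i = 0 ∨ a i = 1)
    (hs : ∀ i, (a (i+1) = -1 ↔ a i = 1))
    (hone : ∀ m, ∃ p, m ≤ p ∧ a p = 1) :
    ∀ m, a m ≠ -1 → 0 < Yt α a m := by
  have hα1 : α < 1 := by linarith
  have habs : ∀ i, |a i| ≤ 1 := by
    intro i; rcases hd i with h | h | h <;> rw [h] <;> norm_num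
  intro m hm
  obtain ⟨p, hmp, hp1⟩ := hone m
  have hex : ∃ i, a (m + i) = 1 := ⟨p - m, by rwa [show m + (p - m) = p from by omega]⟩
  set q := Nat.find hex with hqdef
  have hq1 : a (m + q) = 1 := Nat.find_spec hex
  have hqmin : ∀ i, i < q → a (m + i) ≠ 1 := fun i hi => Nat.find_min hex hi
  have hzero : ∀ i, i < q → a (m + i) = 0 := by
    intro i
    induction i with
    | zero =>
      intro hi
      rcases hd m with h | h | h
      · exact absurd h hm
      · simpa using h
      · exact absurd (by simpa using h) (hqmin 0 hi)
    | succ i ih =>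
      intro hi
      have h0 : a (m + i) = 0 := ih (by omega)
      have hne : a (m + (i+1)) ≠ -1 := by
        intro hc
        rw [show m + (i+1) = (m + i) + 1 from by omega] at hc
        have := (hs (m + i)).1 hc
        rw [h0] at this; norm_num at this
      rcases hd (m + (i+1)) with h | h | h
      · exact absurd h hne
      · exact h
      · exact absurd h (hqmin (i+1) hi)
  have e := Yt_zero_run hα0.le hα1 habs m q hzero
  -- at m+q, digit is 1
  have h1 : a (m + q + 1) = -1 := (hs (m+q)).2 hq1
  have h2 : a (m + q + 2) ≠ -1 := by
    intro hc
    have := (hs (m + q + 1)).1 hc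
    rw [h1] at this; norm_num at this
  have e1 := Yt_shift hα0.le hα1 habs (m + q)
  have e2 := Yt_shift hα0.le hα1 habs (m + q + 1)
  rw [hq1] at e1; rw [h1] at e2
  have e3 : Yt α a (m + q) = 1 - α + α^2 * Yt α a (m + q + 2) := by
    rw [e1, e2]; ring
  have hW := (ac_bound hα0 hαh hd hs (m + q + 2) h2).1
  have hYq : 0 < Yt α a (m + q) := by nlinarith [sq_nonneg α]
  rw [e]
  positivity

end Bounds




lemma summable_series {α : ℝ} (hα0 : 0 ≤ α) (hα1 : α < 1) {c : ℕ → ℝ}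
    (hc : ∀ i, |c i| ≤ 1) : Summable fun i : ℕ => c i * α ^ (i + 1) := by
  apply Summable.of_norm_bounded (g := fun i => α ^ (i + 1))
  · exact ((summable_geometric_of_lt_one hα0 hα1).mul_left α).congr
      (fun i => by rw [pow_succ]; ring)
  · intro i
    rw [Real.norm_eq_abs, abs_mul, abs_pow, abs_of_nonneg hα0]
    calc |c i| * α ^ (i+1) ≤ 1 * α ^ (i+1) :=
        mul_le_mul_of_nonneg_right (hc _) (pow_nonneg hα0 _)
      _ = α ^ (i+1) := one_mul _


end Stmt13Aux


theorem stmt13 (α : ℝ) (hα1 : 1 / 3 < α) (hα2 : α ≤ (3 - Real.sqrt 5) / 2)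
    (n : ℕ → ℕ) (hn : ∀ k, 1 ≤ n k)
    -- `L k` is the prefix of the sequence consisting of the first `k` pairs of blocks
    -- `(1,-1)^{n_{2k-1}} 0^{n_{2k}}`.
    (L : ℕ → List ℝ) (hL0 : L 0 = [])
    (hLs : ∀ k : ℕ, L (k + 1) =
      L k ++ (List.replicate (n (2 * k + 1)) [(1 : ℝ), -1]).flatten ++
        List.replicate (n (2 * k + 2)) (0 : ℝ))
    -- `a` is the infinite concatenation of all the blocks.
    (a : ℕ → ℝ) (ha : ∀ (k i : ℕ), i < (L k).length → a i = (L k).getD i 0) :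
    IsExpansion α (∑' i : ℕ, a i * α ^ (i + 1)) a ∧
      ∀ b : ℕ → ℝ, IsExpansion α (∑' i : ℕ, a i * α ^ (i + 1)) b → b = a := by
  classical
  open Stmt13Aux in
  -- numeric facts
  have hsq5 : Real.sqrt 5 ^ 2 = 5 := Real.sq_sqrt (by norm_num)
  have hs5nn : (0:ℝ) ≤ Real.sqrt 5 := Real.sqrt_nonneg 5
  have hs5 : (11/5 : ℝ) < Real.sqrt 5 := by nlinarith
  have hα0 : (0:ℝ) < α := by linarith
  have hαh : α < 1/2 := by nlinarith
  have hα1' : α < 1 := by linarith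
  have hα25 : α < 2/5 := by nlinarith
  have hq : α ≤ (1 - α)^2 := by nlinarith [sq_nonneg (3 - 2*α - Real.sqrt 5)]
  have hlt : α^2 + 2*α < 1 := by nlinarith
  -- structure of the sequence `a`
  have hBS : ∀ k, Stmt13Aux.IsBlockSeq (L k) := by
    intro k
    induction k with
    | zero => rw [hL0]; exact Stmt13Aux.IsBlockSeq.nil
    | succ k ih =>
      rw [hLs k]
      exact Stmt13Aux.blockseq_append_zeros
        (Stmt13Aux.blockseq_append_pairs ih _) _
  have hlen : ∀ k, k ≤ (L k).length := by
    intro k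
    induction k with
    | zero => exact Nat.zero_le _
    | succ k ih =>
      rw [hLs k]
      simp only [List.length_append, Stmt13Aux.length_flatten_pairs, List.length_replicate]
      have := hn (2*k+1); have := hn (2*k+2)
      omega
  have hd : ∀ i, a i = -1 ∨ a i = 0 ∨ a i = 1 := by
    intro i
    have hi : i < (L (i+1)).length := lt_of_lt_of_le (Nat.lt_succ_self i) (hlen (i+1))
    rw [ha (i+1) i hi]
    exact (hBS (i+1)).getD_mem i
  have hsucc : ∀ i, (a (i+1) = -1 ↔ a i = 1) := by
    intro i
    have h2 : i + 1 < (L (i+2)).length := lt_of_lt_of_le (by omega) (hlen (i+2))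
    rw [ha (i+2) (i+1) h2, ha (i+2) i (by omega)]
    exact (hBS (i+2)).succ_iff i h2
  have hone : ∀ m, ∃ p, m ≤ p ∧ a p = 1 := by
    intro m
    refine ⟨(L m).length, hlen m, ?_⟩
    have hplen : (L m).length < (L (m+1)).length := by
      rw [hLs m]
      simp only [List.length_append, Stmt13Aux.length_flatten_pairs, List.length_replicate]
      have := hn (2*m+1); have := hn (2*m+2)
      omega
    rw [ha (m+1) _ hplen, hLs m, List.append_assoc,
      List.getD_append_right _ _ _ _ (le_refl (L m).length)]
    simp only [Nat.sub_self]
    obtain ⟨s, hs'⟩ : ∃ s, n (2*m+1) = s + 1 := ⟨n (2*m+1) - 1, by have := hn (2*m+1); omega⟩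
    rw [hs', List.replicate_succ]
    rfl
  have habs : ∀ i, |a i| ≤ 1 := by
    intro i; rcases hd i with h | h | h <;> rw [h] <;> norm_num
  refine ⟨⟨hd, rfl⟩, ?_⟩
  intro b hb
  obtain ⟨hbd, hbe⟩ := hb
  have hbabs : ∀ i, |b i| ≤ 1 := by
    intro i; rcases hbd i with h | h | h <;> rw [h] <;> norm_num
  have hsa : Summable fun i : ℕ => a i * α ^ (i + 1) :=
    Stmt13Aux.summable_series hα0.le hα1' habs
  have hsb : Summable fun i : ℕ => b i * α ^ (i + 1) :=
    Stmt13Aux.summable_series hα0.le hα1' hbabs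
  -- numeric auxiliary inequalities
  have h1α : (0:ℝ) < 1 - α := by linarith
  have h1α' : (0:ℝ) < 1 + α := by linarith
  have hau : α / (1-α) ≤ 1 - α := by rw [div_le_iff₀ h1α]; nlinarith
  have hr1 : α / (1-α) < 1 := by rw [div_lt_one h1α]; linarith
  have hr2 : α / (1+α) < 1 := by rw [div_lt_one h1α']; linarith
  have hnum : α/(1-α) + α/(1+α) < 1 := by
    rw [div_add_div _ _ (ne_of_gt h1α) (ne_of_gt h1α'), div_lt_one (by positivity)]
    nlinarith
  have key : ∀ m, b m = a m := by
    intro m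
    induction m using Nat.strong_induction_on with
    | _ m IH =>
    -- the tails at position m agree
    have hYeq : Stmt13Aux.Yt α b m = Stmt13Aux.Yt α a m := by
      have e1 := Summable.sum_add_tsum_nat_add (f := fun i : ℕ => a i * α ^ (i + 1)) m hsa
      have e2 := Summable.sum_add_tsum_nat_add (f := fun i : ℕ => b i * α ^ (i + 1)) m hsb
      have hpre : ∑ i ∈ Finset.range m, b i * α ^ (i + 1)
          = ∑ i ∈ Finset.range m, a i * α ^ (i + 1) :=
        Finset.sum_congr rfl fun i hi => by rw [IH i (Finset.mem_range.1 hi)]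
      have hta : ∑' i : ℕ, (fun i : ℕ => a i * α ^ (i + 1)) (i + m)
          = α ^ (m+1) * Stmt13Aux.Yt α a m := by
        rw [Stmt13Aux.Yt, ← tsum_mul_left]
        apply tsum_congr; intro i
        show a (i + m) * α ^ ((i + m) + 1) = α ^ (m+1) * (a (m + i) * α ^ i)
        rw [show m + i = i + m from by omega]
        ring
      have htb : ∑' i : ℕ, (fun i : ℕ => b i * α ^ (i + 1)) (i + m)
          = α ^ (m+1) * Stmt13Aux.Yt α b m := by
        rw [Stmt13Aux.Yt, ← tsum_mul_left]
        apply tsum_congr; intro i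
        show b (i + m) * α ^ ((i + m) + 1) = α ^ (m+1) * (b (m + i) * α ^ i)
        rw [show m + i = i + m from by omega]
        ring
      rw [hta] at e1
      rw [htb] at e2
      have hcomb : α ^ (m+1) * Stmt13Aux.Yt α b m = α ^ (m+1) * Stmt13Aux.Yt α a m := by
        linarith [e1, e2, hpre, hbe]
      exact mul_left_cancel₀ (pow_ne_zero (m+1) hα0.ne') hcomb
    have eb := Stmt13Aux.Yt_shift hα0.le hα1' hbabs m
    have hZabs := abs_le.1 (Stmt13Aux.Yt_abs_le hα0.le hα1' hbabs (m+1))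
    set Z := Stmt13Aux.Yt α b (m+1) with hZdef
    have hZu : α * Z ≤ α / (1-α) := by
      rw [div_eq_mul_inv]
      exact mul_le_mul_of_nonneg_left hZabs.2 hα0.le
    have hZl : -(α / (1-α)) ≤ α * Z := by
      have h' := mul_le_mul_of_nonneg_left hZabs.1 hα0.le
      have h'' : α * -(1-α)⁻¹ = -(α / (1-α)) := by rw [div_eq_mul_inv]; ring
      linarith [h', h''.ge, h''.le]
    rcases hd m with haM | haM | haM <;> rcases hbd m with hbM | hbM | hbM
    -- a m = -1
    · exact hbM.trans haM.symm
    · exfalso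
      have hm1 : a (m+1) ≠ -1 := by
        intro hc; have := (hsucc m).1 hc; rw [haM] at this; norm_num at this
      have ea := Stmt13Aux.Yt_shift hα0.le hα1' habs m
      rw [haM] at ea
      obtain ⟨hV0, hV1⟩ := Stmt13Aux.ac_bound hα0 hαh hd hsucc (m+1) hm1
      have hVu : α * Stmt13Aux.Yt α a (m+1) ≤ α / (1+α) := by
        rw [div_eq_mul_inv]
        calc α * Stmt13Aux.Yt α a (m+1) ≤ α * (1/(1+α)) :=
            mul_le_mul_of_nonneg_left hV1 hα0.le
          _ = α * (1+α)⁻¹ := by rw [one_div]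
      linarith [eb, hYeq, ea, hZl, hVu, hnum, hbM]
    · exfalso
      have hm1 : a (m+1) ≠ -1 := by
        intro hc; have := (hsucc m).1 hc; rw [haM] at this; norm_num at this
      have ea := Stmt13Aux.Yt_shift hα0.le hα1' habs m
      rw [haM] at ea
      obtain ⟨hV0, hV1⟩ := Stmt13Aux.ac_bound hα0 hαh hd hsucc (m+1) hm1
      have hVu : α * Stmt13Aux.Yt α a (m+1) ≤ α / (1+α) := by
        rw [div_eq_mul_inv]
        calc α * Stmt13Aux.Yt α a (m+1) ≤ α * (1/(1+α)) :=
            mul_le_mul_of_nonneg_left hV1 hα0.le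
          _ = α * (1+α)⁻¹ := by rw [one_div]
      linarith [eb, hYeq, ea, hZl, hVu, hr1, hr2, hbM]
    -- a m = 0
    · exfalso
      have hm1 : a (m+1) ≠ -1 := by
        intro hc; have := (hsucc m).1 hc; rw [haM] at this; norm_num at this
      have ea := Stmt13Aux.Yt_shift hα0.le hα1' habs m
      rw [haM] at ea
      obtain ⟨hV0, hV1⟩ := Stmt13Aux.ac_bound hα0 hαh hd hsucc (m+1) hm1
      have hVl : 0 ≤ α * Stmt13Aux.Yt α a (m+1) := mul_nonneg hα0.le hV0
      linarith [eb, hYeq, ea, hZu, hVl, hr1, hbM]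
    · exact hbM.trans haM.symm
    · exfalso
      have hm1 : a (m+1) ≠ -1 := by
        intro hc; have := (hsucc m).1 hc; rw [haM] at this; norm_num at this
      have ea := Stmt13Aux.Yt_shift hα0.le hα1' habs m
      rw [haM] at ea
      obtain ⟨hV0, hV1⟩ := Stmt13Aux.ac_bound hα0 hαh hd hsucc (m+1) hm1
      have hVu : α * Stmt13Aux.Yt α a (m+1) ≤ α / (1+α) := by
        rw [div_eq_mul_inv]
        calc α * Stmt13Aux.Yt α a (m+1) ≤ α * (1/(1+α)) :=
            mul_le_mul_of_nonneg_left hV1 hα0.le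
          _ = α * (1+α)⁻¹ := by rw [one_div]
      linarith [eb, hYeq, ea, hZl, hVu, hnum, hbM]
    -- a m = 1
    · exfalso
      have h1 : a (m+1) = -1 := (hsucc m).2 haM
      have h2 : a (m+2) ≠ -1 := by
        intro hc; have := (hsucc (m+1)).1 hc; rw [h1] at this; norm_num at this
      have ea1 := Stmt13Aux.Yt_shift hα0.le hα1' habs m
      have ea2 := Stmt13Aux.Yt_shift hα0.le hα1' habs (m+1)
      rw [haM] at ea1; rw [h1] at ea2
      have ea : Stmt13Aux.Yt α a m = 1 - α + α^2 * Stmt13Aux.Yt α a (m+2) := by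
        rw [ea1, ea2]; ring
      have hW := Stmt13Aux.ac_pos hα0 hαh hd hsucc hone (m+2) h2
      have hsqW : 0 < α^2 * Stmt13Aux.Yt α a (m+2) := by positivity
      linarith [eb, hYeq, ea, hZu, hau, hsqW, hbM]
    · exfalso
      have h1 : a (m+1) = -1 := (hsucc m).2 haM
      have h2 : a (m+2) ≠ -1 := by
        intro hc; have := (hsucc (m+1)).1 hc; rw [h1] at this; norm_num at this
      have ea1 := Stmt13Aux.Yt_shift hα0.le hα1' habs m
      have ea2 := Stmt13Aux.Yt_shift hα0.le hα1' habs (m+1)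
      rw [haM] at ea1; rw [h1] at ea2
      have ea : Stmt13Aux.Yt α a m = 1 - α + α^2 * Stmt13Aux.Yt α a (m+2) := by
        rw [ea1, ea2]; ring
      have hW := Stmt13Aux.ac_pos hα0 hαh hd hsucc hone (m+2) h2
      have hsqW : 0 < α^2 * Stmt13Aux.Yt α a (m+2) := by positivity
      linarith [eb, hYeq, ea, hZu, hau, hsqW, hbM]
    · exact hbM.trans haM.symm
  funext m
  exact key m
end
end

section
/- Let 1/3 < α < (3 − √5)/2 and set β = (3 − √5)/2. If a sequence (ε_i)_{i≥1} with every ε_i ∈ {-1,0,1} is the unique {-1,0,1} β-expansion of the number ∑_{i=1}^∞ ε_i β^i, then (ε_i)_{i≥1} is also the unique {-1,0,1} α-expansion of the number ∑_{i=1}^∞ ε_i α^i. -/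
open MeasureTheory Filter Real
open scoped MeasureTheory

noncomputable section

/-- tail value: `∑_{j≥0} a(n+j) α^{j+1}` -/
def tl (α : ℝ) (a : ℕ → ℝ) (n : ℕ) : ℝ := ∑' j : ℕ, a (n + j) * α ^ (j + 1)

def DigSeq (a : ℕ → ℝ) : Prop := ∀ i, a i = -1 ∨ a i = 0 ∨ a i = 1

lemma dig_abs {a : ℕ → ℝ} (h : DigSeq a) (i : ℕ) : |a i| ≤ 1 := by
  rcases h i with h'|h'|h' <;> rw [h'] <;> norm_num

lemma summable_tl {α : ℝ} {a : ℕ → ℝ} (hd : DigSeq a) (h0 : 0 ≤ α) (h1 : α < 1) (n : ℕ) :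
    Summable (fun j : ℕ => a (n + j) * α ^ (j + 1)) := by
  have hg : Summable (fun j : ℕ => α ^ (j + 1)) := by
    simpa [pow_succ] using (summable_geometric_of_lt_one h0 h1).mul_right α
  refine Summable.of_norm_bounded hg ?_
  intro j
  have hb := dig_abs hd (n + j)
  have hp : (0:ℝ) ≤ α ^ (j+1) := pow_nonneg h0 _
  rw [Real.norm_eq_abs, abs_mul, abs_pow, abs_of_nonneg h0]
  nlinarith [abs_nonneg (a (n+j))]

lemma tsum_geom_succ {α : ℝ} (h0 : 0 ≤ α) (h1 : α < 1) :
    ∑' j : ℕ, α ^ (j + 1) = α / (1 - α) := by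
  have : ∑' j : ℕ, α ^ (j+1) = ∑' j : ℕ, α ^ j * α := by
    exact tsum_congr fun j => by ring
  rw [this, tsum_mul_right, tsum_geometric_of_lt_one h0 h1]
  rw [div_eq_mul_inv, mul_comm]

lemma tl_abs_le {α : ℝ} {a : ℕ → ℝ} (hd : DigSeq a) (h0 : 0 ≤ α) (h1 : α < 1) (n : ℕ) :
    |tl α a n| ≤ α / (1 - α) := by
  have hs := summable_tl hd h0 h1 n
  have hg : Summable (fun j : ℕ => α ^ (j + 1)) := by
    simpa [pow_succ] using (summable_geometric_of_lt_one h0 h1).mul_right α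
  have key : ∀ j : ℕ, |a (n + j) * α ^ (j + 1)| ≤ α ^ (j + 1) := by
    intro j
    have hb := dig_abs hd (n + j)
    have hp : (0:ℝ) ≤ α ^ (j+1) := pow_nonneg h0 _
    rw [abs_mul, abs_pow, abs_of_nonneg h0]
    nlinarith [abs_nonneg (a (n+j))]
  rw [abs_le]
  constructor
  · have h2 : ∑' j : ℕ, -(α ^ (j + 1)) ≤ tl α a n := by
      refine Summable.tsum_le_tsum (fun j => ?_) hg.neg hs
      have := key j; rw [abs_le] at this; linarith [this.1]
    rw [tsum_neg, tsum_geom_succ h0 h1] at h2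
    linarith
  · have h2 : tl α a n ≤ ∑' j : ℕ, α ^ (j + 1) := by
      refine Summable.tsum_le_tsum (fun j => ?_) hs hg
      have := key j; rw [abs_le] at this; linarith [this.2]
    rw [tsum_geom_succ h0 h1] at h2
    linarith

lemma tl_rec {α : ℝ} {a : ℕ → ℝ} (hd : DigSeq a) (h0 : 0 ≤ α) (h1 : α < 1) (n : ℕ) :
    tl α a n = a n * α + α * tl α a (n + 1) := by
  rw [tl, Summable.tsum_eq_zero_add (summable_tl hd h0 h1 n)]
  congr 1
  · norm_num
  · rw [tl, ← tsum_mul_left]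
    refine tsum_congr fun j => ?_
    rw [show n + (j + 1) = (n + 1) + j from by omega]
    ring

lemma tl_zeros {α : ℝ} {a : ℕ → ℝ} (hd : DigSeq a) (h0 : 0 ≤ α) (h1 : α < 1)
    {k : ℕ} : ∀ {n : ℕ}, (∀ j, j < k → a (n + j) = 0) →
    tl α a n = α ^ k * tl α a (n + k) := by
  induction k with
  | zero => intro n _; simp
  | succ k ih =>
    intro n hz
    have h00 : a n = 0 := by simpa using hz 0 (Nat.succ_pos k)
    have h1' : tl α a n = α * tl α a (n + 1) := by
      rw [tl_rec hd h0 h1 n, h00]; ring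
    have h2' := ih (n := n + 1) (fun j hj => by
      rw [show n + 1 + j = n + (j+1) from by omega]
      exact hz (j+1) (by omega))
    rw [h1', h2', show n + 1 + k = n + (k + 1) from by omega]
    ring

lemma tl_split {α : ℝ} {a : ℕ → ℝ} (hd : DigSeq a) (h0 : 0 ≤ α) (h1 : α < 1) (n : ℕ) :
    tl α a 0 = ∑ i ∈ Finset.range n, a i * α ^ (i + 1) + α ^ n * tl α a n := by
  induction n with
  | zero => simp
  | succ n ih =>
    rw [Finset.sum_range_succ, ih, tl_rec hd h0 h1 n]
    ring

lemma tl_neg {α : ℝ} (a : ℕ → ℝ) (n : ℕ) :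
    tl α (fun i => -(a i)) n = -tl α a n := by
  rw [tl, tl, ← tsum_neg]
  exact tsum_congr fun j => by ring

lemma dig_neg {a : ℕ → ℝ} (h : DigSeq a) : DigSeq (fun i => -(a i)) := by
  intro i; rcases h i with h'|h'|h' <;> simp [h']

/-- greedy digit choice -/
def gd (α y : ℝ) : ℝ :=
  if 2*α - α/(1-α) ≤ y then 1 else if α - α/(1-α) ≤ y then 0 else -1

def gr (α x : ℝ) : ℕ → ℝ
  | 0 => x
  | n+1 => gr α x n / α - gd α (gr α x n)

lemma gd_dig (α y : ℝ) : gd α y = -1 ∨ gd α y = 0 ∨ gd α y = 1 := by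
  unfold gd; split_ifs <;> simp

lemma gd_step {α y : ℝ} (h1 : 1/3 ≤ α) (h2 : α < 1/2) (hy : |y| ≤ α/(1-α)) :
    |y/α - gd α y| ≤ α/(1-α) := by
  have hα : 0 < α := by linarith
  have h1a : 0 < 1 - α := by linarith
  have hM : α/(1-α) * (1-α) = α := by field_simp
  have hq : y/α * α = y := div_mul_cancel₀ y (ne_of_gt hα)
  rw [abs_le] at hy ⊢
  unfold gd
  split_ifs with hc1 hc2 <;> constructor <;>
    nlinarith [hy.1, hy.2, mul_pos hα h1a, sq_nonneg (y/α), mul_le_mul_of_nonneg_right hy.2 (le_of_lt h1a)]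

lemma gr_bound {α x : ℝ} (h1 : 1/3 ≤ α) (h2 : α < 1/2) (hx : |x| ≤ α/(1-α)) :
    ∀ n, |gr α x n| ≤ α/(1-α) := by
  intro n
  induction n with
  | zero => exact hx
  | succ n ih => exact gd_step h1 h2 ih

lemma gr_sum {α x : ℝ} (hα : 0 < α) :
    ∀ n, x = ∑ i ∈ Finset.range n, gd α (gr α x i) * α ^ (i + 1) + α ^ n * gr α x n := by
  intro n
  induction n with
  | zero => simp [gr]
  | succ n ih =>
    rw [Finset.sum_range_succ]
    have hrec : gr α x (n+1) = gr α x n / α - gd α (gr α x n) := rfl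
    have hstep : α ^ (n+1) * gr α x (n+1)
        = α ^ n * gr α x n - gd α (gr α x n) * α ^ (n+1) := by
      rw [hrec]
      field_simp
      ring
    linarith [ih, hstep]

lemma greedy {α x : ℝ} (h1 : 1/3 ≤ α) (h2 : α < 1/2) (hx : |x| ≤ α/(1-α)) :
    ∃ c : ℕ → ℝ, DigSeq c ∧ tl α c 0 = x := by
  have hα : 0 < α := by linarith
  set c : ℕ → ℝ := fun i => gd α (gr α x i) with hc
  have hdc : DigSeq c := fun i => gd_dig α (gr α x i)
  refine ⟨c, hdc, ?_⟩
  have hs : Summable (fun j : ℕ => c (0 + j) * α ^ (j + 1)) :=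
    summable_tl hdc (le_of_lt hα) (by linarith) 0
  have hT := hs.hasSum.tendsto_sum_nat
  have heq : ∀ n, ∑ i ∈ Finset.range n, c (0 + i) * α ^ (i + 1) = x - α ^ n * gr α x n := by
    intro n
    have := gr_sum (x := x) hα n
    simp only [Nat.zero_add, hc]
    linarith
  have h0' : Tendsto (fun n : ℕ => α ^ n * gr α x n) atTop (nhds 0) := by
    have hg0 : Tendsto (fun n : ℕ => α/(1-α) * α ^ n) atTop (nhds 0) := by
      have := tendsto_pow_atTop_nhds_zero_of_lt_one (le_of_lt hα) (by linarith : α < 1)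
      simpa using this.const_mul (α/(1-α))
    refine squeeze_zero_norm (fun n => ?_) hg0
    rw [Real.norm_eq_abs, abs_mul, abs_pow, abs_of_nonneg (le_of_lt hα)]
    have := gr_bound h1 h2 hx n
    nlinarith [pow_nonneg (le_of_lt hα) n]
  have hT2 : Tendsto (fun n => ∑ i ∈ Finset.range n, c (0 + i) * α ^ (i + 1)) atTop (nhds x) := by
    simp only [heq]
    simpa using tendsto_const_nhds.sub h0'
  have := tendsto_nhds_unique hT hT2
  rw [tl]
  exact this

/-- the key tail condition -/
def Cond (α : ℝ) (a : ℕ → ℝ) : Prop := ∀ m, a m ≠ -1 → α/(1-α) - 1 < tl α a (m+1)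

lemma cond_of_uniq {β : ℝ} (hb1 : 1/3 < β) (hb2 : β < 1/2)
    {a : ℕ → ℝ} (hd : DigSeq a)
    (hu : ∀ b : ℕ → ℝ, DigSeq b → tl β b 0 = tl β a 0 → b = a) : Cond β a := by
  intro m hm
  by_contra hcon
  push_neg at hcon
  have hβ0 : 0 < β := by linarith
  have h1b : 0 < 1 - β := by linarith
  have hβ1 : β < 1 := by linarith
  have hM1 : β/(1-β) < 1 := by rw [div_lt_one h1b]; linarith
  have hM0 : 0 < β/(1-β) := div_pos hβ0 h1b
  set t := tl β a (m+1) with ht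
  have htb := tl_abs_le hd (le_of_lt hβ0) hβ1 (m+1)
  rw [abs_le] at htb
  have hx : |1 + t| ≤ β/(1-β) := by rw [abs_le]; constructor <;> linarith
  obtain ⟨c, hdc, hvc⟩ := greedy (le_of_lt hb1) hb2 hx
  set b : ℕ → ℝ := fun i => if i < m then a i else if i = m then a m - 1 else c (i - (m+1)) with hbdef
  have ham : a m = 0 ∨ a m = 1 := by
    rcases hd m with h|h|h
    · exact absurd h hm
    · exact Or.inl h
    · exact Or.inr h
  have hdb : DigSeq b := by
    intro i
    by_cases hi1 : i < m
    · simpa [hbdef, hi1] using hd i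
    · by_cases hi2 : i = m
      · rcases ham with h|h <;> rw [hbdef] <;> simp [hi1, hi2, h] <;> norm_num
      · simpa [hbdef, hi1, hi2] using hdc (i - (m+1))
  have htlb : tl β b (m+1) = 1 + t := by
    rw [tl, ← hvc, tl]
    refine tsum_congr fun j => ?_
    congr 1
    rw [hbdef]
    simp only
    rw [if_neg (by omega), if_neg (by omega)]
    congr 1
    omega
  have hbm : b m = a m - 1 := by rw [hbdef]; simp
  have hveq : tl β b 0 = tl β a 0 := by
    rw [tl_split hdb (le_of_lt hβ0) hβ1 (m+1),
        tl_split hd (le_of_lt hβ0) hβ1 (m+1), htlb,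
        Finset.sum_range_succ, Finset.sum_range_succ]
    have hpre : ∑ i ∈ Finset.range m, b i * β^(i+1) = ∑ i ∈ Finset.range m, a i * β^(i+1) := by
      refine Finset.sum_congr rfl fun i hi => ?_
      rw [Finset.mem_range] at hi
      rw [hbdef]
      simp [hi]
    rw [hpre, hbm, ← ht]
    ring
  have hba := hu b hdb hveq
  have := congrFun hba m
  rw [hbm] at this
  linarith

lemma tailpos_nextone {α : ℝ} {a : ℕ → ℝ} (hd : DigSeq a) (h0 : 0 < α) (h2 : α < 1/2)
    {n : ℕ} (hpos : 0 < tl α a n) : ∃ k, (∀ j, j < k → a (n+j) = 0) ∧ a (n+k) = 1 := by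
  classical
  have hα1 : α < 1 := by linarith
  have h1a : 0 < 1 - α := by linarith
  have hM1 : α/(1-α) < 1 := by rw [div_lt_one h1a]; linarith
  have hne : ∃ j, a (n+j) ≠ 0 := by
    by_contra h
    push_neg at h
    have hz : tl α a n = 0 := by
      rw [tl]
      calc ∑' j : ℕ, a (n+j) * α^(j+1) = ∑' _ : ℕ, (0:ℝ) :=
            tsum_congr fun j => by rw [h j]; ring
        _ = 0 := tsum_zero
    linarith
  set k := Nat.find hne with hk
  have hk0 : a (n+k) ≠ 0 := Nat.find_spec hne
  have hzs : ∀ j, j < k → a (n+j) = 0 := fun j hj => by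
    by_contra h; exact (Nat.find_min hne hj) h
  refine ⟨k, hzs, ?_⟩
  rcases hd (n+k) with h|h|h
  · exfalso
    have hsk := tl_zeros hd (le_of_lt h0) hα1 (n := n) hzs
    have hrec := tl_rec hd (le_of_lt h0) hα1 (n+k)
    have hb := tl_abs_le hd (le_of_lt h0) hα1 (n+k+1)
    rw [abs_le] at hb
    have hneg : tl α a (n+k) < 0 := by rw [hrec, h]; nlinarith [hb.2]
    have : tl α a n ≤ 0 := by
      rw [hsk]
      have := pow_pos h0 k
      nlinarith
    linarith
  · exact absurd h hk0
  · exact h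

set_option maxHeartbeats 1600000 in
lemma cond_transfer {α β : ℝ} (hb : β = (3 - Real.sqrt 5)/2) (hα1 : 1/3 < α) (hα2 : α < β)
    {a : ℕ → ℝ} (hd : DigSeq a) (hc : Cond β a) : Cond α a := by
  have h5 : Real.sqrt 5 ^ 2 = 5 := Real.sq_sqrt (by norm_num)
  have h5a : (2.2:ℝ) < Real.sqrt 5 := by nlinarith [Real.sqrt_nonneg 5]
  have h5b : Real.sqrt 5 < 2.3 := by nlinarith [Real.sqrt_nonneg 5]
  have hb1 : 1/3 < β := by rw [hb]; norm_num; nlinarith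
  have hb2 : β < 2/5 := by rw [hb]; norm_num; nlinarith
  have hbq : β^2 = 3*β - 1 := by rw [hb]; nlinarith
  have hα0 : 0 < α := by linarith
  have hαlt : α < 2/5 := by linarith
  have hαlt1 : α < 1 := by linarith
  have h1a : 0 < 1 - α := by linarith
  have hβ0 : 0 < β := by linarith
  have hβ1 : β < 1 := by linarith
  have h1b : 0 < 1 - β := by linarith
  have hquad : 0 < α^2 - 3*α + 1 := by nlinarith
  have hMa1 : α/(1-α) < 1 := by rw [div_lt_one h1a]; linarith
  have hkeyA : (α/(1-α))*(1-α) = α := by field_simp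
  intro m hm
  have hreca := tl_rec hd (le_of_lt hα0) hαlt1 (m+1)
  have hba2 := tl_abs_le hd (le_of_lt hα0) hαlt1 (m+1+1)
  rw [abs_le] at hba2
  rcases hd (m+1) with h|h|h
  · -- a (m+1) = -1 : use the β condition
    have hc1 := hc m hm
    have hMb : β/(1-β) - 1 = -β := by
      rw [div_sub_one (ne_of_gt h1b), div_eq_iff (ne_of_gt h1b)]
      nlinarith
    have hrecb := tl_rec hd (le_of_lt hβ0) hβ1 (m+1)
    have hpos : 0 < tl β a (m+1+1) := by
      rw [hrecb, h, hMb] at hc1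
      nlinarith
    obtain ⟨k, hz, h1k⟩ := tailpos_nextone hd hβ0 (by linarith) hpos
    have hzk := tl_zeros hd (le_of_lt hα0) hαlt1 (n := m+1+1) hz
    have hreck := tl_rec hd (le_of_lt hα0) hαlt1 (m+1+1+k)
    have hbk := tl_abs_le hd (le_of_lt hα0) hαlt1 (m+1+1+k+1)
    rw [abs_le] at hbk
    have hposk : 0 < tl α a (m+1+1+k) := by
      rw [hreck, h1k]
      have h7 : α * -(α/(1-α)) ≤ α * tl α a (m+1+1+k+1) :=
        mul_le_mul_of_nonneg_left hbk.1 hα0.le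
      have h8 : α * (α/(1-α)) < α * 1 := by
        exact mul_lt_mul_of_pos_left hMa1 hα0
      linarith
    have hpos2 : 0 < tl α a (m+1+1) := by
      rw [hzk]; exact mul_pos (pow_pos hα0 k) hposk
    rw [hreca, h]
    have hstep : α/(1-α) - 1 ≤ -α := by
      rw [sub_le_iff_le_add, div_le_iff₀ h1a]
      nlinarith [hquad]
    have h3 : 0 < α * tl α a (m+1+1) := mul_pos hα0 hpos2
    linarith
  · rw [hreca, h]
    have hM23 : α/(1-α) ≤ 2/3 := by rw [div_le_iff₀ h1a]; linarith
    have h6 : α * (α/(1-α)) ≤ (2/5)*(2/3) :=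
      mul_le_mul hαlt.le hM23 (by positivity) (by norm_num)
    have h7 : α * -(α/(1-α)) ≤ α * tl α a (m+1+1) :=
      mul_le_mul_of_nonneg_left hba2.1 hα0.le
    linarith
  · rw [hreca, h]
    have hM23 : α/(1-α) ≤ 2/3 := by rw [div_le_iff₀ h1a]; linarith
    have h6 : α * (α/(1-α)) ≤ (2/5)*(2/3) :=
      mul_le_mul hαlt.le hM23 (by positivity) (by norm_num)
    have h7 : α * -(α/(1-α)) ≤ α * tl α a (m+1+1) :=
      mul_le_mul_of_nonneg_left hba2.1 hα0.le
    linarith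

lemma uniq_of_cond {α : ℝ} (h0 : 0 < α) (h2 : α < 1/2) {a b : ℕ → ℝ}
    (hda : DigSeq a) (hdb : DigSeq b) (hca : Cond α a) (hcn : Cond α (fun i => -(a i)))
    (hv : tl α b 0 = tl α a 0) : b = a := by
  have hα1 : α < 1 := by linarith
  have h1a : 0 < 1 - α := by linarith
  have hM1 : α/(1-α) < 1 := by rw [div_lt_one h1a]; linarith
  have hca' : ∀ m, a m ≠ 1 → tl α a (m+1) < 1 - α/(1-α) := by
    intro m hm
    have hne : (fun i => -(a i)) m ≠ -1 := by
      show -(a m) ≠ -1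
      intro hh; exact hm (by linarith)
    have := hcn m hne
    rw [tl_neg] at this
    linarith
  funext i
  induction i using Nat.strong_induction_on with
  | _ m ih =>
    have hpre : ∑ i ∈ Finset.range m, b i * α^(i+1) = ∑ i ∈ Finset.range m, a i * α^(i+1) :=
      Finset.sum_congr rfl fun i hi => by rw [ih i (Finset.mem_range.mp hi)]
    have hsb := tl_split hdb (le_of_lt h0) hα1 m
    have hsa := tl_split hda (le_of_lt h0) hα1 m
    have htm : tl α b m = tl α a m := by
      have hpow : (0:ℝ) < α ^ m := pow_pos h0 m
      have hh : α^m * tl α b m = α^m * tl α a m := by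
        rw [hsb, hsa, hpre] at hv; linarith
      exact mul_left_cancel₀ (ne_of_gt hpow) hh
    have hrb := tl_rec hdb (le_of_lt h0) hα1 m
    have hra := tl_rec hda (le_of_lt h0) hα1 m
    have hrel : b m + tl α b (m+1) = a m + tl α a (m+1) := by
      have hh : α * (b m + tl α b (m+1)) = α * (a m + tl α a (m+1)) := by
        rw [hrb, hra] at htm
        nlinarith [htm]
      exact mul_left_cancel₀ (ne_of_gt h0) hh
    have hBb := tl_abs_le hdb (le_of_lt h0) hα1 (m+1)
    rw [abs_le] at hBb
    have hBa := tl_abs_le hda (le_of_lt h0) hα1 (m+1)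
    rw [abs_le] at hBa
    rcases hda m with h1'|h1'|h1' <;> rcases hdb m with h2'|h2'|h2'
    · rw [h1', h2']
    · exfalso
      rw [h1', h2'] at hrel
      linarith [hca' m (by rw [h1']; norm_num), hBb.1]
    · exfalso
      rw [h1', h2'] at hrel
      linarith [hBa.2, hBb.1]
    · exfalso
      rw [h1', h2'] at hrel
      linarith [hca m (by rw [h1']; norm_num), hBb.2]
    · rw [h1', h2']
    · exfalso
      rw [h1', h2'] at hrel
      linarith [hca' m (by rw [h1']; norm_num), hBb.1]
    · exfalso
      rw [h1', h2'] at hrel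
      linarith [hBa.1, hBb.2]
    · exfalso
      rw [h1', h2'] at hrel
      linarith [hca m (by rw [h1']; norm_num), hBb.2]
    · rw [h1', h2']

theorem stmt19 (α β : ℝ) (hβ : β = (3 - Real.sqrt 5) / 2)
    (hα1 : 1 / 3 < α) (hα2 : α < β)
    (ε : ℕ → ℝ) (hdig : ∀ i, ε i = -1 ∨ ε i = 0 ∨ ε i = 1)
    (huniqβ : ∀ b : ℕ → ℝ, IsExpansion β (∑' i : ℕ, ε i * β ^ (i + 1)) b → b = ε) :
    IsExpansion α (∑' i : ℕ, ε i * α ^ (i + 1)) ε ∧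
      ∀ b : ℕ → ℝ, IsExpansion α (∑' i : ℕ, ε i * α ^ (i + 1)) b → b = ε := by
  constructor
  · exact ⟨hdig, rfl⟩
  · intro b hb
    have h5 : Real.sqrt 5 ^ 2 = 5 := Real.sq_sqrt (by norm_num)
    have h5a : (2.2:ℝ) < Real.sqrt 5 := by nlinarith [Real.sqrt_nonneg 5]
    have h5b : Real.sqrt 5 < 2.3 := by nlinarith [Real.sqrt_nonneg 5]
    have hb1 : 1/3 < β := by rw [hβ]; nlinarith
    have hb2 : β < 2/5 := by rw [hβ]; nlinarith
    have hα0 : 0 < α := by linarith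
    have hα12 : α < 1/2 := by linarith
    have htl0 : ∀ (γ : ℝ) (c : ℕ → ℝ), tl γ c 0 = ∑' i : ℕ, c i * γ^(i+1) :=
      fun γ c => tsum_congr fun j => by rw [Nat.zero_add]
    have hdm : DigSeq ε := hdig
    have hu : ∀ c : ℕ → ℝ, DigSeq c → tl β c 0 = tl β ε 0 → c = ε := by
      intro c hdc hvc
      apply huniqβ
      refine ⟨hdc, ?_⟩
      rw [← htl0 β ε, ← htl0 β c, hvc]
    have hun : ∀ c : ℕ → ℝ, DigSeq c → tl β c 0 = tl β (fun i => -(ε i)) 0 →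
        c = (fun i => -(ε i)) := by
      intro c hdc hvc
      rw [tl_neg] at hvc
      have h2 : tl β (fun i => -(c i)) 0 = tl β ε 0 := by rw [tl_neg]; linarith
      have h3 := hu _ (dig_neg hdc) h2
      funext i
      have h4 : -(c i) = ε i := congrFun h3 i
      show c i = -(ε i)
      linarith
    have hcb : Cond β ε := cond_of_uniq hb1 (by linarith) hdm hu
    have hcbn : Cond β (fun i => -(ε i)) := cond_of_uniq hb1 (by linarith) (dig_neg hdm) hun
    have hca : Cond α ε := cond_transfer hβ hα1 hα2 hdm hcb
    have hcan : Cond α (fun i => -(ε i)) := cond_transfer hβ hα1 hα2 (dig_neg hdm) hcbn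
    obtain ⟨hdb, hvb⟩ := hb
    apply uniq_of_cond hα0 hα12 hdm hdb hca hcan
    rw [htl0 α b, htl0 α ε]
    exact hvb.symm
end
end
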